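/- arXiv:math/0209178 — 3 statements merged into one kernel-verified Lean document; each statement's English description precedes it below -/
import Mathlib

section
/- Let G = G(Q^n,p) be a random subgraph of the n-cube and let k ≥ 1 be a fixed integer. If p = p(n) = Θ(2^{-n/k}·n^{-1}), then 2^n · C(n,k) · p^k · (1−p)^{n−k} = Θ(1), the quantity κ(n) = max{ j : 2^n · C(n,j) · p^j · (1−p)^{n−j} ≥ 1 } equals k−1 or k, and almost surely the maximum degree Δ(G) is either k−1 or k. -/
open MeasureTheory Filter Asymptotics

noncomputable section

/-- The `n`-dimensional cube graph `Q^n`: vertices are vectors in `{0,1}^n`,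
two vertices adjacent iff they differ in exactly one coordinate. -/
def cubeGraph (n : ℕ) : SimpleGraph (Fin n → Bool) where
  Adj x y := hammingDist x y = 1
  symm := ⟨fun x y h => by show hammingDist y x = 1; rwa [hammingDist_comm]⟩
  loopless := ⟨fun x h => by simp [hammingDist_self] at h⟩

/-- The subgraph of the `n`-cube determined by a configuration `ω` of edge indicators:
an edge of `Q^n` is kept iff its indicator is `true`. -/
def randCube (n : ℕ) (ω : Sym2 (Fin n → Bool) → Bool) : SimpleGraph (Fin n → Bool) where
  Adj x y := (cubeGraph n).Adj x y ∧ ω s(x, y) = true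
  symm := ⟨fun x y h => ⟨(cubeGraph n).adj_symm h.1, by rw [Sym2.eq_swap]; exact h.2⟩⟩
  loopless := ⟨fun x h => (cubeGraph n).loopless.irrefl x h.1⟩

/-- The product Bernoulli(p) measure on edge-indicator configurations: each potential
edge appears independently with probability `p`. -/
def cubeMeasure (n : ℕ) (p : ℝ) : Measure (Sym2 (Fin n → Bool) → Bool) :=
  Measure.pi fun _ => (PMF.bernoulli (min (Real.toNNReal p) 1) (min_le_right _ _)).toMeasure

/-- Degree of a vertex. -/
def deg {V : Type*} [Fintype V] (G : SimpleGraph V) (v : V) : ℕ := (G.neighborSet v).ncard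

/-- Maximum degree. -/
def maxDeg {V : Type*} [Fintype V] (G : SimpleGraph V) : ℕ := ⨆ v, deg G v

/-- Adjacency matrix over ℝ. -/
def adjMat {V : Type*} [Fintype V] (G : SimpleGraph V) : Matrix V V ℝ :=
  @SimpleGraph.adjMatrix ℝ V G (Classical.decRel _) _ _

theorem adjMat_isHermitian {V : Type*} [Fintype V] (G : SimpleGraph V) :
    (adjMat G).IsHermitian := by
  apply Matrix.ext
  intro i j
  simp only [adjMat, Matrix.conjTranspose_apply, SimpleGraph.adjMatrix_apply, star_trivial]
  by_cases h : G.Adj i j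
  · rw [if_pos h, if_pos (G.adj_symm h)]
  · rw [if_neg h, if_neg (fun hji => h (G.adj_symm hji))]

/-- The largest eigenvalue of the adjacency matrix of `G`. -/
def lambda1 {V : Type*} [Fintype V] [DecidableEq V] (G : SimpleGraph V) : ℝ :=
  ⨆ v, (adjMat_isHermitian G).eigenvalues v

/-- `κ(n) = max { k : 2^n C(n,k) p^k (1-p)^{n-k} ≥ 1 }`. -/
def kappa (n : ℕ) (p : ℝ) : ℕ :=
  sSup {k : ℕ | 1 ≤ (2 : ℝ) ^ n * n.choose k * p ^ k * (1 - p) ^ (n - k)}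

namespace CubeAux

open scoped ENNReal
open Classical in
/-- weighted counting "measure" of a set of boolean configurations -/
def mass {ι : Type*} [Fintype ι] [DecidableEq ι] (w : Bool → ℝ≥0∞) (A : Set (ι → Bool)) : ℝ≥0∞ :=
  ∑ ω : ι → Bool, if ω ∈ A then ∏ i, w (ω i) else 0

variable {ι : Type*} [Fintype ι] [DecidableEq ι]

lemma mass_def (w : Bool → ℝ≥0∞) (A : Set (ι → Bool)) [DecidablePred (· ∈ A)] :
    mass w A = ∑ ω : ι → Bool, if ω ∈ A then ∏ i, w (ω i) else 0 := by
  unfold mass; congr 1; funext ω; congr 1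

lemma mass_univ (w : Bool → ℝ≥0∞) (hw : w true + w false = 1) :
    mass w (Set.univ : Set (ι → Bool)) = 1 := by
  classical
  rw [mass_def]
  have : ∑ ω : ι → Bool, (if ω ∈ (Set.univ : Set (ι → Bool)) then ∏ i, w (ω i) else 0)
      = ∑ ω : ι → Bool, ∏ i, w (ω i) := by
    apply Finset.sum_congr rfl; intro ω _; simp
  rw [this, ← Fintype.prod_sum (fun (_ : ι) (b : Bool) => w b)]
  have : ∀ _i : ι, ∑ b : Bool, w b = 1 := fun _ => by
    rw [Fintype.sum_bool]; rw [hw]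
  rw [Finset.prod_congr rfl (fun i _ => this i)]
  simp

lemma mass_singleton (w : Bool → ℝ≥0∞) (x₀ : ι → Bool) :
    mass w ({x₀} : Set (ι → Bool)) = ∏ i, w (x₀ i) := by
  classical
  rw [mass_def, Finset.sum_eq_single x₀]
  · simp
  · intro b _ hb; simp [hb]
  · intro h; exact absurd (Finset.mem_univ x₀) h

/-- reindexing by an equivalence -/
lemma mass_reindex {α : Type*} [Fintype α] [DecidableEq α] (w : Bool → ℝ≥0∞) (e : α ≃ ι)
    (Q : Set (α → Bool)) :
    mass w {y : ι → Bool | (fun a => y (e a)) ∈ Q} = mass w Q := by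
  classical
  rw [mass_def, mass_def]
  simp only [Set.mem_setOf_eq]
  rw [← Equiv.sum_comp (Equiv.arrowCongr e (Equiv.refl Bool))
      (fun y : ι → Bool => if (fun a => y (e a)) ∈ Q then ∏ i, w (y i) else 0)]
  apply Finset.sum_congr rfl
  intro x _
  have h1 : (fun a => (Equiv.arrowCongr e (Equiv.refl Bool) x) (e a)) = x := by
    funext a; simp [Equiv.arrowCongr]
  have h2 : ∏ i, w ((Equiv.arrowCongr e (Equiv.refl Bool) x) i) = ∏ a, w (x a) := by
    rw [← Equiv.prod_comp e (fun i => w ((Equiv.arrowCongr e (Equiv.refl Bool) x) i))]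
    apply Finset.prod_congr rfl
    intro a _; simp [Equiv.arrowCongr]
  rw [h1, h2]

/-- splitting along a predicate -/
lemma mass_split (w : Bool → ℝ≥0∞) (p : ι → Prop) [DecidablePred p]
    (A : Set ({i // p i} → Bool)) (B : Set ({i // ¬ p i} → Bool)) :
    mass w {ω : ι → Bool | (fun i : {i // p i} => ω i) ∈ A ∧ (fun i : {i // ¬ p i} => ω i) ∈ B}
      = mass w A * mass w B := by
  classical
  rw [mass_def, mass_def, mass_def]
  simp only [Set.mem_setOf_eq]
  set e := Equiv.piEquivPiSubtypeProd p (fun _ : ι => Bool) with he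
  rw [← Equiv.sum_comp e.symm
      (fun ω : ι → Bool => if ((fun i : {i // p i} => ω i) ∈ A ∧
        (fun i : {i // ¬ p i} => ω i) ∈ B) then ∏ i, w (ω i) else 0)]
  rw [Fintype.sum_prod_type]
  have key : ∀ z : ({i // p i} → Bool) × ({i // ¬ p i} → Bool),
      (if ((fun i : {i // p i} => e.symm z i) ∈ A ∧
        (fun i : {i // ¬ p i} => e.symm z i) ∈ B) then ∏ i, w (e.symm z i) else 0)
      = (if z.1 ∈ A then ∏ i, w (z.1 i) else 0) * (if z.2 ∈ B then ∏ i, w (z.2 i) else 0) := by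
    intro z
    have hz1 : (fun i : {i // p i} => e.symm z i) = z.1 := by
      funext i; simp [he, Equiv.piEquivPiSubtypeProd, i.2]
    have hz2 : (fun i : {i // ¬ p i} => e.symm z i) = z.2 := by
      funext i; simp [he, Equiv.piEquivPiSubtypeProd, i.2]
    have hprod : ∏ i, w (e.symm z i) = (∏ i, w (z.1 i)) * ∏ i, w (z.2 i) := by
      rw [← Fintype.prod_subtype_mul_prod_subtype p (fun i => w (e.symm z i))]
      congr 1
      · exact Finset.prod_congr rfl fun i _ => by rw [congrFun hz1 i]
      · exact Finset.prod_congr rfl fun i _ => by rw [congrFun hz2 i]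
    rw [hz1, hz2, hprod]
    by_cases h1 : z.1 ∈ A <;> by_cases h2 : z.2 ∈ B <;> simp [h1, h2]
  calc ∑ x, ∑ y, (if ((fun i : {i // p i} => e.symm (x, y) i) ∈ A ∧
        (fun i : {i // ¬ p i} => e.symm (x, y) i) ∈ B) then ∏ i, w (e.symm (x, y) i) else 0)
      = ∑ x, ∑ y, (if x ∈ A then ∏ i, w (x i) else 0) * (if y ∈ B then ∏ i, w (y i) else 0) := by
        apply Finset.sum_congr rfl; intro x _; apply Finset.sum_congr rfl; intro y _
        exact key (x, y)
    _ = _ := by rw [← Finset.sum_mul_sum]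

/-- `A` depends only on the coordinates in `S`. -/
def DepOn (A : Set (ι → Bool)) (S : Set ι) : Prop :=
  ∀ ω ω' : ι → Bool, (∀ i ∈ S, ω i = ω' i) → ω ∈ A → ω' ∈ A

lemma DepOn.mono {A : Set (ι → Bool)} {S T : Set ι} (h : DepOn A S) (hst : S ⊆ T) :
    DepOn A T := fun ω ω' hag => h ω ω' (fun i hi => hag i (hst hi))

lemma depOn_biInter {κ : Type*} {W : Finset κ} {D : κ → Set (ι → Bool)} {S : Set ι}
    (h : ∀ v ∈ W, DepOn (D v) S) : DepOn (⋂ v ∈ W, D v) S := by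
  intro ω ω' hag hω
  simp only [Set.mem_iInter] at hω ⊢
  exact fun v hv => h v hv ω ω' hag (hω v hv)

lemma mass_inter_of_depOn (w : Bool → ℝ≥0∞) (hw : w true + w false = 1)
    (S : Set ι) (A B : Set (ι → Bool)) (hA : DepOn A S) (hB : DepOn B Sᶜ) :
    mass w (A ∩ B) = mass w A * mass w B := by
  classical
  set p : ι → Prop := fun i => i ∈ S with hp
  set A₁ : Set ({i // p i} → Bool) := {x | ∃ ω ∈ A, ∀ i : {i // p i}, ω i.1 = x i} with hA₁
  set B₂ : Set ({i // ¬ p i} → Bool) := {x | ∃ ω ∈ B, ∀ i : {i // ¬ p i}, ω i.1 = x i} with hB₂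
  have memA : ∀ ω : ι → Bool, ω ∈ A ↔ (fun i : {i // p i} => ω i.1) ∈ A₁ := by
    intro ω
    constructor
    · intro hω; exact ⟨ω, hω, fun i => rfl⟩
    · rintro ⟨ω', hω', hag⟩
      exact hA ω' ω (fun i hi => hag ⟨i, hi⟩) hω'
  have memB : ∀ ω : ι → Bool, ω ∈ B ↔ (fun i : {i // ¬ p i} => ω i.1) ∈ B₂ := by
    intro ω
    constructor
    · intro hω; exact ⟨ω, hω, fun i => rfl⟩
    · rintro ⟨ω', hω', hag⟩
      exact hB ω' ω (fun i hi => hag ⟨i, hi⟩) hω'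
  have hsetAB : A ∩ B = {ω : ι → Bool | (fun i : {i // p i} => ω i.1) ∈ A₁ ∧
      (fun i : {i // ¬ p i} => ω i.1) ∈ B₂} := by
    ext ω; simp only [Set.mem_inter_iff, Set.mem_setOf_eq, memA ω, memB ω]
  have hsetA : A = {ω : ι → Bool | (fun i : {i // p i} => ω i.1) ∈ A₁ ∧
      (fun i : {i // ¬ p i} => ω i.1) ∈ (Set.univ : Set ({i // ¬ p i} → Bool))} := by
    ext ω; simp only [Set.mem_setOf_eq, Set.mem_univ, and_true, memA ω]
  have hsetB : B = {ω : ι → Bool | (fun i : {i // p i} => ω i.1) ∈ (Set.univ : Set ({i // p i} → Bool)) ∧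
      (fun i : {i // ¬ p i} => ω i.1) ∈ B₂} := by
    ext ω; simp only [Set.mem_setOf_eq, Set.mem_univ, true_and, memB ω]
  rw [hsetAB, hsetA, hsetB, mass_split, mass_split, mass_split, mass_univ _ hw, mass_univ _ hw]
  ring

lemma mass_biInter (w : Bool → ℝ≥0∞) (hw : w true + w false = 1) {κ : Type*} [DecidableEq κ]
    (W : Finset κ) (Bl : κ → Set ι) (D : κ → Set (ι → Bool))
    (hdisj : ∀ u ∈ W, ∀ v ∈ W, u ≠ v → Disjoint (Bl u) (Bl v))
    (hD : ∀ v ∈ W, DepOn (D v) (Bl v)) :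
    mass w (⋂ v ∈ W, D v) = ∏ v ∈ W, mass w (D v) := by
  classical
  induction W using Finset.induction_on with
  | empty => simp [mass_univ w hw]
  | @insert a W ha ih =>
    have h1 : (⋂ v ∈ insert a W, D v) = D a ∩ ⋂ v ∈ W, D v := by
      simp [Finset.set_biInter_insert]
    rw [h1, mass_inter_of_depOn w hw (Bl a) _ _ (hD a (Finset.mem_insert_self a W))]
    · rw [Finset.prod_insert ha, ih]
      · intro u hu v hv huv
        exact hdisj u (Finset.mem_insert_of_mem hu) v (Finset.mem_insert_of_mem hv) huv
      · intro v hv; exact hD v (Finset.mem_insert_of_mem hv)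
    · apply depOn_biInter
      intro v hv
      apply (hD v (Finset.mem_insert_of_mem hv)).mono
      have hne : a ≠ v := fun h => ha (h ▸ hv)
      have := hdisj a (Finset.mem_insert_self a W) v (Finset.mem_insert_of_mem hv) hne
      exact Set.subset_compl_iff_disjoint_left.2 this

set_option maxHeartbeats 2000000 in
lemma mass_pullback (w : Bool → ℝ≥0∞) (hw : w true + w false = 1)
    {α : Type*} [Fintype α] [DecidableEq α] (g : α → ι) (hg : Function.Injective g)
    (Q : Set (α → Bool)) :
    mass w {ω : ι → Bool | (fun a => ω (g a)) ∈ Q} = mass w Q := by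
  classical
  set p : ι → Prop := fun i => i ∈ Set.range g with hp
  set e' : α ≃ {i // p i} := Equiv.ofBijective (fun a => (⟨g a, ⟨a, rfl⟩⟩ : {i // p i}))
    (by
      constructor
      · intro a b hab
        exact hg (congrArg Subtype.val hab)
      · rintro ⟨i, a, rfl⟩
        exact ⟨a, rfl⟩) with he'
  set A₁ : Set ({i // p i} → Bool) := {x | (fun a => x (e' a)) ∈ Q} with hA₁
  have h1 : mass w A₁ = mass w Q := mass_reindex w e' Q
  have hset : {ω : ι → Bool | (fun a => ω (g a)) ∈ Q}
      = {ω : ι → Bool | (fun i : {i // p i} => ω i.1) ∈ A₁ ∧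
        (fun i : {i // ¬ p i} => ω i.1) ∈ (Set.univ : Set ({i // ¬ p i} → Bool))} := by
    ext ω
    simp only [Set.mem_setOf_eq, Set.mem_univ, and_true, hA₁]
    have heq : (fun a => ω ((e' a) : ι)) = fun a => ω (g a) := by
      funext a; rfl
    constructor
    · intro hq; rwa [heq]
    · intro hq; rwa [heq] at hq
  rw [hset, mass_split, mass_univ _ hw, mul_one]
  exact Eq.trans (by congr 1 <;> exact Subsingleton.elim _ _) h1

lemma mass_le_one (w : Bool → ℝ≥0∞) (hw : w true + w false = 1)
    (A : Set (ι → Bool)) : mass w A ≤ 1 := by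
  classical
  rw [← mass_univ (ι := ι) w hw, mass_def, mass_def]
  apply Finset.sum_le_sum
  intro ω _
  by_cases h : ω ∈ A <;> simp [h]

lemma mass_compl (w : Bool → ℝ≥0∞) (hw : w true + w false = 1)
    (A : Set (ι → Bool)) : mass w Aᶜ = 1 - mass w A := by
  classical
  have hadd : mass w A + mass w Aᶜ = 1 := by
    rw [mass_def, mass_def, ← Finset.sum_add_distrib, ← mass_univ (ι := ι) w hw, mass_def]
    apply Finset.sum_congr rfl
    intro ω _
    by_cases h : ω ∈ A <;> simp [h]
  rw [← hadd]
  rw [ENNReal.add_sub_cancel_left]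
  intro h
  have := mass_le_one w hw A
  rw [h] at this
  exact (by simp : ¬ ((⊤:ℝ≥0∞) ≤ 1)) this

/-- every subset of a finite product of `Bool`s is measurable -/
lemma measurableSet_all [Countable ι] (S : Set (ι → Bool)) : MeasurableSet S := by
  have h1 : ∀ ω : ι → Bool, MeasurableSet ({ω} : Set (ι → Bool)) := by
    intro ω
    have : ({ω} : Set (ι → Bool)) = ⋂ i, (fun f : ι → Bool => f i) ⁻¹' {ω i} := by
      ext f; simp [funext_iff]
    rw [this]
    exact MeasurableSet.iInter fun i => (measurable_pi_apply i) (measurableSet_singleton _)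
  have h2 : S = ⋃ x ∈ S, {x} := by simp
  rw [h2]
  exact MeasurableSet.biUnion (Set.to_countable S) (fun x _ => h1 x)

lemma measure_pi_eq_mass (m : Measure Bool) [IsProbabilityMeasure m] (w : Bool → ℝ≥0∞)
    (hm : ∀ b, m {b} = w b) (A : Set (ι → Bool)) :
    Measure.pi (fun _ : ι => m) A = mass w A := by
  classical
  have hsing : ∀ ω : ι → Bool, Measure.pi (fun _ : ι => m) {ω} = ∏ i, w (ω i) := by
    intro ω
    have h : ({ω} : Set (ι → Bool)) = Set.univ.pi (fun i => ({ω i} : Set Bool)) := by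
      ext f; simp [Set.mem_pi, funext_iff]
    rw [h, Measure.pi_pi]
    exact Finset.prod_congr rfl fun i _ => hm (ω i)
  set F : Finset (ι → Bool) := (Set.toFinite A).toFinset with hF
  have hA : A = ⋃ x ∈ F, ({x} : Set (ι → Bool)) := by
    ext y
    simp only [Set.mem_iUnion, Set.mem_singleton_iff, hF, Set.Finite.mem_toFinset]
    constructor
    · intro hy; exact ⟨y, hy, rfl⟩
    · rintro ⟨x, hx, rfl⟩; exact hx
  rw [hA, measure_biUnion_finset]
  · rw [mass_def]
    rw [← Finset.sum_filter]
    have : Finset.univ.filter (fun ω : ι → Bool => ω ∈ ⋃ x ∈ F, ({x} : Set (ι → Bool))) = F := by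
      ext ω; simp [hF, Set.Finite.mem_toFinset]
    rw [this]
    exact Finset.sum_congr rfl fun x _ => hsing x
  · intro x _ y _ hxy
    simp [Function.onFun, Set.disjoint_singleton, hxy]
  · intro b _; exact measurableSet_singleton b

variable {α : Type*} [Fintype α] [DecidableEq α]

def flipB (x : α → Bool) (a : α) : α → Bool := Function.update x a (!(x a))

lemma flipB_apply_self (x : α → Bool) (a : α) : flipB x a a = !(x a) := by simp [flipB]

lemma flipB_apply_ne (x : α → Bool) {a b : α} (h : b ≠ a) : flipB x a b = x b := by
  simp [flipB, Function.update_of_ne h]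

lemma flipB_ne (x : α → Bool) (a : α) : flipB x a ≠ x := by
  intro h
  have := congrFun h a
  rw [flipB_apply_self] at this
  exact (Bool.not_ne_self (x a)) this

lemma flipB_index_inj (x : α → Bool) {a b : α} (h : flipB x a = flipB x b) : a = b := by
  by_contra hab
  have h1 := congrFun h a
  rw [flipB_apply_self, flipB_apply_ne x (hab : a ≠ b)] at h1
  exact (Bool.not_ne_self (x a)) h1

lemma bool_ne_iff {a b : Bool} : a ≠ b ↔ b = !a := by cases a <;> cases b <;> simp

lemma hammingDist_eq_one_iff {x y : α → Bool} :
    hammingDist x y = 1 ↔ ∃ a, y = flipB x a := by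
  constructor
  · intro h
    rw [hammingDist, Finset.card_eq_one] at h
    obtain ⟨a, ha⟩ := h
    refine ⟨a, funext fun b => ?_⟩
    by_cases hb : b = a
    · subst hb
      have : b ∈ Finset.univ.filter fun i => x i ≠ y i := by rw [ha]; simp
      have hne : x b ≠ y b := by simpa using this
      rw [flipB_apply_self]
      exact (bool_ne_iff.1 hne)
    · have : b ∉ Finset.univ.filter fun i => x i ≠ y i := by rw [ha]; simp [hb]
      have heq : x b = y b := by simpa using this
      rw [flipB_apply_ne x hb, heq]
  · rintro ⟨a, rfl⟩
    rw [hammingDist]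
    have : (Finset.univ.filter fun i => x i ≠ flipB x a i) = {a} := by
      ext b
      simp only [Finset.mem_filter, Finset.mem_univ, true_and, Finset.mem_singleton]
      constructor
      · intro hb
        by_contra hba
        rw [flipB_apply_ne x hba] at hb
        exact hb rfl
      · rintro rfl
        rw [flipB_apply_self]
        intro hcontra
        exact (Bool.not_ne_self (x b)) hcontra.symm
    rw [this, Finset.card_singleton]

def par (x : α → Bool) : ZMod 2 := ∑ a, (if x a then 1 else 0)

lemma par_flipB (x : α → Bool) (a : α) : par (flipB x a) = par x + 1 := by
  unfold par
  have h1 : ∀ b, (if flipB x a b then (1 : ZMod 2) else 0)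
      = Function.update (fun b => if x b then (1 : ZMod 2) else 0) a (if !(x a) then 1 else 0) b := by
    intro b
    by_cases hb : b = a
    · subst hb; rw [flipB_apply_self]; simp
    · rw [flipB_apply_ne x hb, Function.update_of_ne hb]
  rw [Finset.sum_congr rfl (fun b _ => h1 b)]
  rw [Finset.sum_update_of_mem (Finset.mem_univ a)]
  have h2 : ∑ b ∈ Finset.univ \ {a}, (if x b then (1 : ZMod 2) else 0)
      = (∑ b, (if x b then (1 : ZMod 2) else 0)) - (if x a then 1 else 0) := by
    rw [eq_sub_iff_add_eq, Finset.sum_sdiff_eq_sub (Finset.singleton_subset_iff.2 (Finset.mem_univ a)),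
      Finset.sum_singleton, sub_add_cancel]
  rw [h2]
  have h3 : (if !(x a) then (1 : ZMod 2) else 0) = (if x a then (1 : ZMod 2) else 0) + 1 := by
    cases hxa : x a <;> simp <;> decide
  rw [h3]; ring

section Cube
variable {n : ℕ}

/-- the potential cube edge at vertex `v` in direction `i` -/
def edge (v : Fin n → Bool) (i : Fin n) : Sym2 (Fin n → Bool) := s(v, flipB v i)

lemma edge_inj (v : Fin n → Bool) : Function.Injective (edge v) := by
  intro i j h
  unfold edge at h
  rw [Sym2.eq_iff] at h
  rcases h with ⟨-, h2⟩ | ⟨h1, -⟩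
  · exact flipB_index_inj v h2
  · exact absurd h1.symm (flipB_ne v j)

lemma edge_disjoint {u v : Fin n → Bool} (hne : u ≠ v) (hnadj : hammingDist u v ≠ 1) :
    Disjoint (Set.range (edge u)) (Set.range (edge v)) := by
  rw [Set.disjoint_left]
  rintro e ⟨i, rfl⟩ ⟨j, hj⟩
  unfold edge at hj
  rw [Sym2.eq_iff] at hj
  rcases hj with ⟨h1, -⟩ | ⟨h1, -⟩
  · exact hne h1.symm
  · exact hnadj (hammingDist_eq_one_iff.2 ⟨i, h1⟩)

lemma randCube_adj (ω : Sym2 (Fin n → Bool) → Bool) (v u : Fin n → Bool) :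
    (randCube n ω).Adj v u ↔ ∃ i, u = flipB v i ∧ ω (edge v i) = true := by
  show (hammingDist v u = 1 ∧ ω s(v, u) = true) ↔ _
  constructor
  · rintro ⟨h1, h2⟩
    obtain ⟨i, rfl⟩ := hammingDist_eq_one_iff.1 h1
    exact ⟨i, rfl, h2⟩
  · rintro ⟨i, rfl, h2⟩
    exact ⟨hammingDist_eq_one_iff.2 ⟨i, rfl⟩, h2⟩

lemma deg_randCube (ω : Sym2 (Fin n → Bool) → Bool) (v : Fin n → Bool) :
    deg (randCube n ω) v = (Finset.univ.filter fun i => ω (edge v i) = true).card := by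
  have h1 : (randCube n ω).neighborSet v = flipB v '' {i | ω (edge v i) = true} := by
    ext u
    rw [SimpleGraph.mem_neighborSet, randCube_adj]
    constructor
    · rintro ⟨i, rfl, h⟩; exact ⟨i, h, rfl⟩
    · rintro ⟨i, h, rfl⟩; exact ⟨i, rfl, h⟩
  have hinj : Function.Injective (flipB v) := fun i j h => flipB_index_inj v h
  rw [deg, h1, Set.ncard_image_of_injective _ hinj]
  have : {i | ω (edge v i) = true} = ↑(Finset.univ.filter fun i => ω (edge v i) = true) := by
    ext i; simp
  rw [this, Set.ncard_coe_finset]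

lemma deg_le_maxDeg {V : Type*} [Fintype V] (G : SimpleGraph V) (v : V) :
    deg G v ≤ maxDeg G :=
  le_ciSup (Set.Finite.bddAbove (Set.finite_range _)) v

lemma maxDeg_le {V : Type*} [Fintype V] [Nonempty V] (G : SimpleGraph V) (m : ℕ)
    (h : ∀ v, deg G v ≤ m) : maxDeg G ≤ m := ciSup_le h

lemma card_filter_coe_lt {m : ℕ} (h : m ≤ n) :
    (Finset.univ.filter fun i : Fin n => (i : ℕ) < m).card = m := by
  have : (Finset.univ.filter fun i : Fin n => (i : ℕ) < m)
      = (Finset.univ : Finset (Fin m)).map ⟨Fin.castLE h, Fin.castLE_injective h⟩ := by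
    ext j
    simp only [Finset.mem_filter, Finset.mem_univ, true_and, Finset.mem_map,
      Function.Embedding.coeFn_mk]
    constructor
    · intro hj
      refine ⟨⟨(j : ℕ), hj⟩, ?_⟩
      ext
      simp [Fin.castLE]
    · rintro ⟨a, rfl⟩; exact a.2
  rw [this, Finset.card_map, Finset.card_univ, Fintype.card_fin]

/-- an embedding of an `(n-1)`-dimensional cube as an "independent set" in the `n`-cube -/
def gp (n : ℕ) (y : Fin (n - 1) → Bool) : Fin n → Bool :=
  fun j => if h : (j : ℕ) < n - 1 then y ⟨j, h⟩ else decide (par y = 1)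

lemma gp_inj : Function.Injective (gp n) := by
  intro y y' h
  funext a
  have := congrFun h ⟨(a : ℕ), a.2.trans_le (Nat.sub_le n 1)⟩
  unfold gp at this
  rw [dif_pos, dif_pos] at this
  · simpa using this
  · exact a.2
  · exact a.2

lemma gp_emb_val (y : Fin (n - 1) → Bool) (b : Fin (n - 1)) :
    gp n y ⟨(b : ℕ), b.2.trans_le (Nat.sub_le n 1)⟩ = y b :=
  dif_pos b.2

lemma gp_not_adj (y y' : Fin (n - 1) → Bool) : hammingDist (gp n y) (gp n y') ≠ 1 := by
  intro h
  obtain ⟨j, hj⟩ := hammingDist_eq_one_iff.1 h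
  by_cases hjlt : (j : ℕ) < n - 1
  · set a : Fin (n - 1) := ⟨(j : ℕ), hjlt⟩ with ha
    have hja : j = ⟨(a : ℕ), a.2.trans_le (Nat.sub_le n 1)⟩ := by ext; simp [ha]
    have hy' : y' = flipB y a := by
      funext b
      have hvb := congrFun hj ⟨(b : ℕ), b.2.trans_le (Nat.sub_le n 1)⟩
      by_cases hb : b = a
      · subst hb
        rw [← hja, flipB_apply_self] at hvb
        rw [hja, gp_emb_val, gp_emb_val] at hvb
        rw [flipB_apply_self, hvb]
      · have hembj : (⟨(b : ℕ), b.2.trans_le (Nat.sub_le n 1)⟩ : Fin n) ≠ j := by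
          intro hc
          apply hb
          ext
          simpa [ha] using congrArg Fin.val hc
        rw [flipB_apply_ne _ hembj, gp_emb_val, gp_emb_val] at hvb
        rw [flipB_apply_ne _ hb, hvb]
    have hpar : par y' = par y + 1 := by rw [hy', par_flipB]
    have hdec : decide (par y' = 1) = !decide (par y = 1) := by
      rw [hpar]
      have hz : ∀ z : ZMod 2, decide (z + 1 = 1) = !decide (z = 1) := by decide
      exact hz (par y)
    have hnpos : 0 < n := j.pos
    have hvl := congrFun hj ⟨n - 1, Nat.sub_lt hnpos one_pos⟩
    have hlj : (⟨n - 1, Nat.sub_lt hnpos one_pos⟩ : Fin n) ≠ j := by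
      intro hc
      have := congrArg Fin.val hc
      simp only at this
      omega
    rw [flipB_apply_ne _ hlj] at hvl
    have h1 : gp n y' ⟨n - 1, Nat.sub_lt hnpos one_pos⟩ = decide (par y' = 1) :=
      dif_neg (lt_irrefl _)
    have h2 : gp n y ⟨n - 1, Nat.sub_lt hnpos one_pos⟩ = decide (par y = 1) :=
      dif_neg (lt_irrefl _)
    rw [h1, h2, hdec] at hvl
    exact (Bool.not_ne_self (decide (par y = 1))) hvl
  · have hyy : y = y' := by
      funext b
      have hvb := congrFun hj ⟨(b : ℕ), b.2.trans_le (Nat.sub_le n 1)⟩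
      have hembj : (⟨(b : ℕ), b.2.trans_le (Nat.sub_le n 1)⟩ : Fin n) ≠ j := by
        intro hc
        apply hjlt
        have := congrArg Fin.val hc
        simp only at this
        omega
      rw [flipB_apply_ne _ hembj, gp_emb_val, gp_emb_val] at hvb
      exact hvb.symm
    rw [← hyy] at hj
    exact flipB_ne (gp n y) j hj.symm

end Cube

section Prob
open scoped ENNReal
variable {n kk : ℕ} {pr : ℝ}

def wB (pr : ℝ) : Bool → ℝ≥0∞ := fun b => cond b (ENNReal.ofReal pr) (1 - ENNReal.ofReal pr)

lemma wB_sum (h1 : pr ≤ 1) : wB pr true + wB pr false = 1 := by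
  show ENNReal.ofReal pr + (1 - ENNReal.ofReal pr) = 1
  exact add_tsub_cancel_of_le (ENNReal.ofReal_le_one.2 h1)

lemma cubeMeasure_eq_mass (h1 : pr ≤ 1) (A : Set (Sym2 (Fin n → Bool) → Bool)) :
    cubeMeasure n pr A = mass (wB pr) A := by
  have hmin : min (Real.toNNReal pr) 1 = Real.toNNReal pr :=
    min_eq_left (Real.toNNReal_le_one.2 h1)
  unfold cubeMeasure
  apply measure_pi_eq_mass
  intro b
  rw [PMF.toMeasure_apply_singleton _ _ (measurableSet_singleton b), PMF.bernoulli_apply]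
  cases b
  · show ((1 - min (Real.toNNReal pr) 1 : NNReal) : ℝ≥0∞) = wB pr false
    rw [hmin, ENNReal.coe_sub, ENNReal.coe_one]; rfl
  · show ((min (Real.toNNReal pr) 1 : NNReal) : ℝ≥0∞) = wB pr true
    rw [hmin]; rfl

lemma measure_upper (h1 : pr ≤ 1) (K : ℕ) :
    cubeMeasure n pr {ω | K + 1 ≤ maxDeg (randCube n ω)}
      ≤ 2^n * (n.choose (K+1)) * (ENNReal.ofReal pr)^(K+1) := by
  classical
  have hsub : {ω : Sym2 (Fin n → Bool) → Bool | K + 1 ≤ maxDeg (randCube n ω)} ⊆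
      ⋃ v : Fin n → Bool, ⋃ I ∈ Finset.powersetCard (K+1) (Finset.univ : Finset (Fin n)),
        {ω | ∀ i ∈ I, ω (edge v i) = true} := by
    intro ω hω
    simp only [Set.mem_setOf_eq] at hω
    have hv : ∃ v, K + 1 ≤ deg (randCube n ω) v := by
      by_contra hv
      push_neg at hv
      have := maxDeg_le (randCube n ω) K (fun v => Nat.lt_succ_iff.mp (hv v))
      omega
    obtain ⟨v, hvdeg⟩ := hv
    rw [deg_randCube] at hvdeg
    obtain ⟨I, hIsub, hIcard⟩ := Finset.exists_subset_card_eq hvdeg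
    exact Set.mem_iUnion.2 ⟨v, Set.mem_biUnion
      (Finset.mem_powersetCard.2 ⟨Finset.subset_univ I, hIcard⟩)
      (fun i hi => (Finset.mem_filter.1 (hIsub hi)).2)⟩
  refine le_trans (measure_mono hsub) ?_
  refine le_trans (measure_iUnion_fintype_le _ _) ?_
  have hbound : ∀ v : Fin n → Bool,
      cubeMeasure n pr (⋃ I ∈ Finset.powersetCard (K+1) (Finset.univ : Finset (Fin n)),
        {ω | ∀ i ∈ I, ω (edge v i) = true})
        ≤ (n.choose (K+1) : ℝ≥0∞) * (ENNReal.ofReal pr)^(K+1) := by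
    intro v
    refine le_trans (measure_biUnion_finset_le _ _) ?_
    have hval : ∀ I ∈ Finset.powersetCard (K+1) (Finset.univ : Finset (Fin n)),
        cubeMeasure n pr {ω : Sym2 (Fin n → Bool) → Bool | ∀ i ∈ I, ω (edge v i) = true}
          = (ENNReal.ofReal pr)^(K+1) := by
      intro I hI
      rw [cubeMeasure_eq_mass h1]
      have hIcard : I.card = K + 1 := (Finset.mem_powersetCard.1 hI).2
      have hset : {ω : Sym2 (Fin n → Bool) → Bool | ∀ i ∈ I, ω (edge v i) = true}
          = {ω : Sym2 (Fin n → Bool) → Bool |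
              (fun a : {i // i ∈ I} => ω (edge v a.1)) ∈
                ({fun _ => true} : Set ({i // i ∈ I} → Bool))} := by
        ext ω
        simp only [Set.mem_setOf_eq, Set.mem_singleton_iff, funext_iff]
        constructor
        · intro h a; exact h a.1 a.2
        · intro h i hi; exact h ⟨i, hi⟩
      rw [hset, mass_pullback _ (wB_sum h1) _
        (fun a b hab => Subtype.ext (edge_inj v hab)), mass_singleton]
      rw [Finset.prod_const, Finset.card_univ, Fintype.card_coe, hIcard]
      rfl
    rw [Finset.sum_congr rfl hval, Finset.sum_const, Finset.card_powersetCard,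
      Finset.card_univ, Fintype.card_fin, nsmul_eq_mul]
  refine le_trans (Finset.sum_le_sum (fun v _ => hbound v)) ?_
  rw [Finset.sum_const, Finset.card_univ, nsmul_eq_mul]
  have hcard : (Fintype.card (Fin n → Bool) : ℝ≥0∞) = 2^n := by
    rw [Fintype.card_fun, Fintype.card_fin, Fintype.card_bool]
    push_cast
    rfl
  rw [hcard, mul_assoc]

lemma measure_lower (h1 : pr ≤ 1) (K : ℕ) (hKn : K ≤ n) :
    cubeMeasure n pr {ω | ∀ v ∈ Finset.image (gp n) Finset.univ,
        (fun i => ω (edge v i)) ≠ (fun i : Fin n => decide ((i : ℕ) < K))}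
      = (1 - ENNReal.ofReal pr ^ K * (1 - ENNReal.ofReal pr)^(n - K)) ^ 2^(n-1) := by
  classical
  set pat : Fin n → Bool := fun i => decide ((i : ℕ) < K) with hpat
  set F : Finset (Fin n → Bool) := Finset.image (gp n) Finset.univ with hF
  set D : (Fin n → Bool) → Set (Sym2 (Fin n → Bool) → Bool) :=
    fun v => {ω | (fun i => ω (edge v i)) ≠ pat} with hD
  have hevent : {ω : Sym2 (Fin n → Bool) → Bool | ∀ v ∈ F, (fun i => ω (edge v i)) ≠ pat}
      = ⋂ v ∈ F, D v := by
    ext ω; simp only [Set.mem_setOf_eq, Set.mem_iInter, hD]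
  rw [cubeMeasure_eq_mass h1, hevent]
  have hdisj : ∀ u ∈ F, ∀ v ∈ F, u ≠ v → Disjoint (Set.range (edge u)) (Set.range (edge v)) := by
    intro u hu v hv huv
    obtain ⟨y, -, rfl⟩ := Finset.mem_image.1 hu
    obtain ⟨y', -, rfl⟩ := Finset.mem_image.1 hv
    exact edge_disjoint huv (gp_not_adj y y')
  have hdep : ∀ v ∈ F, DepOn (D v) (Set.range (edge v)) := by
    intro v _ ω ω' hag hω
    simp only [hD, Set.mem_setOf_eq] at hω ⊢
    intro hc
    apply hω
    funext i
    rw [hag (edge v i) ⟨i, rfl⟩, congrFun hc i]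
  rw [mass_biInter (wB pr) (wB_sum h1) F (fun v => Set.range (edge v)) D hdisj hdep]
  have hmassD : ∀ v ∈ F, mass (wB pr) (D v)
      = 1 - ENNReal.ofReal pr ^ K * (1 - ENNReal.ofReal pr)^(n - K) := by
    intro v _
    have hDc : D v = {ω : Sym2 (Fin n → Bool) → Bool |
        (fun i => ω (edge v i)) ∈ ({pat} : Set (Fin n → Bool))}ᶜ := by
      ext ω; simp [hD]
    rw [hDc, mass_compl _ (wB_sum h1), mass_pullback _ (wB_sum h1) _ (edge_inj v),
      mass_singleton]
    congr 1
    have hsplit : ∀ i : Fin n, wB pr (pat i)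
        = if (i : ℕ) < K then ENNReal.ofReal pr else 1 - ENNReal.ofReal pr := by
      intro i
      by_cases h : (i : ℕ) < K <;> simp [hpat, h, wB]
    rw [Finset.prod_congr rfl (fun i _ => hsplit i), Finset.prod_ite, Finset.prod_const,
      Finset.prod_const, card_filter_coe_lt hKn]
    congr 2
    have := Finset.card_filter_add_card_filter_not
      (s := (Finset.univ : Finset (Fin n))) (p := fun i : Fin n => (i : ℕ) < K)
    rw [Finset.card_univ, Fintype.card_fin] at this
    rw [card_filter_coe_lt hKn] at this
    omega
  rw [Finset.prod_congr rfl hmassD, Finset.prod_const]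
  congr 1
  rw [hF, Finset.card_image_of_injective _ gp_inj, Finset.card_univ, Fintype.card_fun,
    Fintype.card_fin, Fintype.card_bool]

lemma compl_subset_union (hk : 1 ≤ kk) (hkn : kk - 1 ≤ n) :
    {ω : Sym2 (Fin n → Bool) → Bool |
        maxDeg (randCube n ω) = kk - 1 ∨ maxDeg (randCube n ω) = kk}ᶜ
      ⊆ {ω | kk + 1 ≤ maxDeg (randCube n ω)} ∪
        {ω | ∀ v ∈ Finset.image (gp n) Finset.univ,
          (fun i => ω (edge v i)) ≠ (fun i : Fin n => decide ((i : ℕ) < kk - 1))} := by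
  intro ω hω
  simp only [Set.mem_compl_iff, Set.mem_setOf_eq, not_or] at hω
  obtain ⟨h1, h2⟩ := hω
  by_cases hbig : kk + 1 ≤ maxDeg (randCube n ω)
  · exact Or.inl hbig
  · right
    have hlt : maxDeg (randCube n ω) < kk - 1 := by omega
    intro v hv heq
    have hdeg : deg (randCube n ω) v = kk - 1 := by
      rw [deg_randCube]
      have hfe : (Finset.univ.filter fun i => ω (edge v i) = true)
          = (Finset.univ.filter fun i : Fin n => (i : ℕ) < kk - 1) := by
        apply Finset.filter_congr
        intro i _
        rw [congrFun heq i, decide_eq_true_eq]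
      rw [hfe, card_filter_coe_lt hkn]
    have := deg_le_maxDeg (randCube n ω) v
    omega

lemma measure_bad_le (h1 : pr ≤ 1) (hk : 1 ≤ kk) (hkn : kk ≤ n) :
    cubeMeasure n pr {ω | maxDeg (randCube n ω) = kk - 1 ∨ maxDeg (randCube n ω) = kk}ᶜ
      ≤ 2^n * (n.choose (kk+1)) * (ENNReal.ofReal pr)^(kk+1)
        + (1 - ENNReal.ofReal pr ^ (kk-1) * (1 - ENNReal.ofReal pr)^(n - (kk-1))) ^ 2^(n-1) := by
  refine le_trans (measure_mono (compl_subset_union hk (le_trans (Nat.sub_le _ _) hkn))) ?_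
  refine le_trans (measure_union_le _ _) ?_
  exact add_le_add (measure_upper h1 kk)
    (le_of_eq (measure_lower h1 (kk-1) (le_trans (Nat.sub_le _ _) hkn)))

end Prob

lemma rpow_pow (x : ℝ) (m : ℕ) : ((2:ℝ) ^ x) ^ m = (2:ℝ) ^ (x * m) := by
  rw [← Real.rpow_natCast ((2:ℝ) ^ x) m, ← Real.rpow_mul (by norm_num)]

lemma rpow_neg_nat (n : ℕ) : (2:ℝ) ^ (-(n:ℝ)) = ((2:ℝ) ^ n)⁻¹ := by
  rw [Real.rpow_neg (by norm_num), Real.rpow_natCast]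

set_option maxHeartbeats 1000000 in
lemma stmt12 (k : ℕ) (hk : 1 ≤ k) (C₁ C₂ : ℝ) (hC₁ : 0 < C₁) (hC₂ : 0 < C₂)
    (n : ℕ) (P : ℝ) (hP0 : 0 < P) (hP1 : P ≤ 1)
    (hL : C₁ * ((2:ℝ) ^ (-(n:ℝ) / (k:ℝ)) * (n:ℝ)⁻¹) ≤ P)
    (hU : P ≤ C₂ * ((2:ℝ) ^ (-(n:ℝ) / (k:ℝ)) * (n:ℝ)⁻¹))
    (hn : 2*k+2 ≤ n)
    (hE2 : 2*C₂ ≤ (2:ℝ) ^ ((n:ℝ)/(k:ℝ)))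
    (hE3 : C₂^(k+1) < (2:ℝ) ^ ((n:ℝ)/(k:ℝ)))
    (hE4 : 1 ≤ (C₁^(k-1)/(2^k * ((k-1).factorial : ℝ))) * (2:ℝ) ^ ((n:ℝ)/(k:ℝ))) :
    (C₁^k/(2^(k+1) * (k.factorial : ℝ)) ≤ (2:ℝ)^n * (n.choose k) * P^k * (1-P)^(n-k)
      ∧ (2:ℝ)^n * (n.choose k) * P^k * (1-P)^(n-k) ≤ C₂^k)
    ∧ (kappa n P = k - 1 ∨ kappa n P = k) := by
  have hk0 : (0:ℝ) < k := by exact_mod_cast hk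
  have hnpos : 0 < n := by omega
  have hnR : (1:ℝ) ≤ (n:ℝ) := by exact_mod_cast hnpos
  have hnne : (n:ℝ) ≠ 0 := by positivity
  have hnC : (2*(k:ℝ)+2) ≤ (n:ℝ) := by exact_mod_cast hn
  set A : ℝ := (2:ℝ) ^ (-(n:ℝ)/(k:ℝ)) with hA
  set R : ℝ := (2:ℝ) ^ ((n:ℝ)/(k:ℝ)) with hR
  have hA0 : 0 < A := Real.rpow_pos_of_pos (by norm_num) _
  have hR0 : 0 < R := Real.rpow_pos_of_pos (by norm_num) _
  have hAR : A = R⁻¹ := by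
    rw [hA, hR, neg_div, Real.rpow_neg (by norm_num)]
  set a : ℝ := A * (n:ℝ)⁻¹ with ha
  have ha0 : 0 < a := by
    apply mul_pos hA0; positivity
  have hna : (n:ℝ) * a = A := by
    rw [ha]; field_simp
  have h2npos : (0:ℝ) < 2^n := by positivity
  have hAk : A ^ k = ((2:ℝ)^n)⁻¹ := by
    rw [hA, rpow_pow]
    have h : -(n:ℝ)/(k:ℝ) * (k:ℝ) = -(n:ℝ) := by field_simp
    rw [h, rpow_neg_nat]
  have hAk1 : A ^ (k-1) = ((2:ℝ)^n)⁻¹ * R := by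
    rw [hA, rpow_pow]
    have hcast : ((k-1 : ℕ):ℝ) = (k:ℝ) - 1 := by
      rw [Nat.cast_sub hk]; norm_num
    have h : -(n:ℝ)/(k:ℝ) * ((k-1:ℕ):ℝ) = -(n:ℝ) + (n:ℝ)/(k:ℝ) := by
      rw [hcast]; field_simp; ring
    rw [h, Real.rpow_add (by norm_num), rpow_neg_nat, hR]
  have hAk2 : A ^ (k+1) = ((2:ℝ)^n)⁻¹ * R⁻¹ := by
    rw [hA, rpow_pow]
    have h : -(n:ℝ)/(k:ℝ) * ((k+1:ℕ):ℝ) = -(n:ℝ) + (-(n:ℝ)/(k:ℝ)) := by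
      push_cast; field_simp; ring
    rw [h, Real.rpow_add (by norm_num), rpow_neg_nat, ← hAR]
  have hCA : C₂ * A ≤ 1/2 := by
    rw [hAR, ← div_eq_mul_inv, div_le_div_iff₀ hR0 (by norm_num : (0:ℝ) < 2)]
    linarith
  have hainvle : a ≤ A := by
    have := mul_le_mul_of_nonneg_left (inv_le_one_of_one_le₀ hnR) hA0.le
    rw [mul_one] at this
    rw [ha]; exact this
  have hCa : C₂ * a ≤ C₂ * A := mul_le_mul_of_nonneg_left hainvle hC₂.le
  have hPhalf : P ≤ 1/2 := le_trans hU (le_trans hCa hCA)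
  have h1P0 : (0:ℝ) ≤ 1 - P := by linarith
  have h1P1 : 1 - P ≤ 1 := by linarith
  have hnP : (n:ℝ) * P ≤ C₂ * A := by
    have h1 : (n:ℝ) * P ≤ (n:ℝ) * (C₂ * a) :=
      mul_le_mul_of_nonneg_left hU (by positivity)
    have h2 : (n:ℝ) * (C₂ * a) = C₂ * A := by rw [← hna]; ring
    linarith
  have hbern : 1/2 ≤ (1-P)^n := by
    have h1 := one_add_mul_le_pow (show (-2:ℝ) ≤ -P by linarith) n
    have h2 : (1 + (n:ℝ) * -P) = 1 - (n:ℝ)*P := by ring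
    rw [h2] at h1
    have h3 : (1 + -P)^n = (1-P)^n := by ring_nf
    rw [h3] at h1
    linarith
  have hmono : ∀ m : ℕ, m ≤ n → (1-P)^n ≤ (1-P)^m :=
    fun m hm => pow_le_pow_of_le_one h1P0 h1P1 hm
  have hchoose_up : ∀ j : ℕ, (n.choose j : ℝ) ≤ (n:ℝ)^j := by
    intro j; exact_mod_cast Nat.choose_le_pow n j
  have hchoose_low : ∀ j : ℕ, j ≤ k → ((n:ℝ)/2)^j / (j.factorial:ℝ) ≤ (n.choose j : ℝ) := by
    intro j hj
    have hcast : ((n + 1 - j : ℕ):ℝ) = (n:ℝ) + 1 - (j:ℝ) := by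
      rw [Nat.cast_sub (by omega)]; push_cast; ring
    have hjC : (j:ℝ) ≤ (k:ℝ) := by exact_mod_cast hj
    have h1 : ((n:ℝ)/2)^j ≤ ((n + 1 - j : ℕ):ℝ)^j := by
      apply pow_le_pow_left₀ (by positivity)
      rw [hcast]; linarith
    have hfacpos : (0:ℝ) < (j.factorial:ℝ) := by exact_mod_cast j.factorial_pos
    calc ((n:ℝ)/2)^j / (j.factorial:ℝ)
        ≤ ((n + 1 - j : ℕ):ℝ)^j / (j.factorial:ℝ) := by
          exact div_le_div_of_nonneg_right h1 hfacpos.le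
      _ ≤ (n.choose j : ℝ) := by exact_mod_cast Nat.pow_le_choose (α := ℝ) j n
  -- STATEMENT 1 : upper bound
  have hupper : (2:ℝ)^n * (n.choose k) * P^k * (1-P)^(n-k) ≤ C₂^k := by
    have hc : (2:ℝ)^n * (n.choose k) * P^k * (1-P)^(n-k)
        ≤ (2:ℝ)^n * (n:ℝ)^k * (C₂*a)^k * 1 := by
      have e1 : P ^ k ≤ (C₂*a)^k := pow_le_pow_left₀ hP0.le hU k
      have e2 : (1-P)^(n-k) ≤ 1 := pow_le_one₀ h1P0 h1P1
      have e3 := hchoose_up k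
      have w1 : (0:ℝ) ≤ P ^ k := by positivity
      have w3 : (0:ℝ) ≤ (n:ℝ)^k := by positivity
      calc (2:ℝ)^n * (n.choose k) * P^k * (1-P)^(n-k)
          ≤ (2:ℝ)^n * (n.choose k) * P^k * 1 :=
            mul_le_mul_of_nonneg_left e2 (by positivity)
        _ = (2:ℝ)^n * ((n.choose k : ℝ) * P^k) := by ring
        _ ≤ (2:ℝ)^n * ((n:ℝ)^k * (C₂*a)^k) :=
            mul_le_mul_of_nonneg_left (mul_le_mul e3 e1 w1 w3) h2npos.le
        _ = (2:ℝ)^n * (n:ℝ)^k * (C₂*a)^k * 1 := by ring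
    have heq : (2:ℝ)^n * (n:ℝ)^k * (C₂*a)^k * 1 = C₂^k := by
      rw [mul_pow, ha, mul_pow, hAk, inv_pow]
      field_simp
      try ring
    linarith
  -- STATEMENT 1 : lower bound
  have hlower : C₁^k/(2^(k+1) * (k.factorial : ℝ)) ≤ (2:ℝ)^n * (n.choose k) * P^k * (1-P)^(n-k) := by
    have hc : (2:ℝ)^n * (((n:ℝ)/2)^k / (k.factorial:ℝ)) * (C₁*a)^k * (1/2)
        ≤ (2:ℝ)^n * (n.choose k) * P^k * (1-P)^(n-k) := by
      have e1 : (C₁*a)^k ≤ P^k := pow_le_pow_left₀ (by positivity) hL k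
      have e2 : (1/2 : ℝ) ≤ (1-P)^(n-k) := le_trans hbern (hmono (n-k) (Nat.sub_le n k))
      have e3 := hchoose_low k le_rfl
      have w1 : (0:ℝ) ≤ (C₁*a)^k := le_of_lt (pow_pos (mul_pos hC₁ ha0) k)
      have w2 : (0:ℝ) ≤ ((n:ℝ)/2)^k / (k.factorial:ℝ) := by positivity
      have w6 : (0:ℝ) ≤ (1-P)^(n-k) := by positivity
      calc (2:ℝ)^n * (((n:ℝ)/2)^k / (k.factorial:ℝ)) * (C₁*a)^k * (1/2)
          ≤ (2:ℝ)^n * (((n:ℝ)/2)^k / (k.factorial:ℝ)) * (C₁*a)^k * ((1-P)^(n-k)) := by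
            apply mul_le_mul_of_nonneg_left e2
            exact mul_nonneg (mul_nonneg h2npos.le w2) w1
        _ ≤ (2:ℝ)^n * (n.choose k) * P^k * ((1-P)^(n-k)) := by
            apply mul_le_mul_of_nonneg_right _ w6
            calc (2:ℝ)^n * (((n:ℝ)/2)^k / (k.factorial:ℝ)) * (C₁*a)^k
                = (2:ℝ)^n * ((((n:ℝ)/2)^k / (k.factorial:ℝ)) * (C₁*a)^k) := by ring
              _ ≤ (2:ℝ)^n * ((n.choose k : ℝ) * P^k) :=
                  mul_le_mul_of_nonneg_left
                    (mul_le_mul e3 e1 w1 (by positivity)) h2npos.le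
              _ = (2:ℝ)^n * (n.choose k) * P^k := by ring
    have heq : (2:ℝ)^n * (((n:ℝ)/2)^k / (k.factorial:ℝ)) * (C₁*a)^k * (1/2)
        = C₁^k/(2^(k+1) * (k.factorial : ℝ)) := by
      rw [ha, mul_pow, mul_pow, hAk, inv_pow, div_pow]
      have hfk : ((k.factorial:ℝ)) ≠ 0 := by
        have : (0:ℝ) < (k.factorial:ℝ) := by exact_mod_cast k.factorial_pos
        linarith
      field_simp
      try ring
    linarith
  -- STATEMENT 2 : kappa
  have hkappa : kappa n P = k - 1 ∨ kappa n P = k := by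
    set S : Set ℕ := {j : ℕ | 1 ≤ (2 : ℝ) ^ n * n.choose j * P ^ j * (1 - P) ^ (n - j)} with hS
    have hmem : k - 1 ∈ S := by
      have hkk : k - 1 ≤ k := Nat.sub_le k 1
      have hc : (2:ℝ)^n * (((n:ℝ)/2)^(k-1) / ((k-1).factorial:ℝ)) * (C₁*a)^(k-1) * (1/2)
          ≤ (2:ℝ)^n * (n.choose (k-1)) * P^(k-1) * (1-P)^(n-(k-1)) := by
        have e1 : (C₁*a)^(k-1) ≤ P^(k-1) := pow_le_pow_left₀ (by positivity) hL (k-1)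
        have e2 : (1/2 : ℝ) ≤ (1-P)^(n-(k-1)) := le_trans hbern (hmono (n-(k-1)) (Nat.sub_le _ _))
        have e3 := hchoose_low (k-1) hkk
        have w1 : (0:ℝ) ≤ (C₁*a)^(k-1) := le_of_lt (pow_pos (mul_pos hC₁ ha0) (k-1))
        have w2 : (0:ℝ) ≤ ((n:ℝ)/2)^(k-1) / ((k-1).factorial:ℝ) := by positivity
        have w6 : (0:ℝ) ≤ (1-P)^(n-(k-1)) := by positivity
        calc (2:ℝ)^n * (((n:ℝ)/2)^(k-1) / ((k-1).factorial:ℝ)) * (C₁*a)^(k-1) * (1/2)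
            ≤ (2:ℝ)^n * (((n:ℝ)/2)^(k-1) / ((k-1).factorial:ℝ)) * (C₁*a)^(k-1) * ((1-P)^(n-(k-1))) := by
              apply mul_le_mul_of_nonneg_left e2
              exact mul_nonneg (mul_nonneg h2npos.le w2) w1
          _ ≤ (2:ℝ)^n * (n.choose (k-1)) * P^(k-1) * ((1-P)^(n-(k-1))) := by
              apply mul_le_mul_of_nonneg_right _ w6
              calc (2:ℝ)^n * (((n:ℝ)/2)^(k-1) / ((k-1).factorial:ℝ)) * (C₁*a)^(k-1)
                  = (2:ℝ)^n * ((((n:ℝ)/2)^(k-1) / ((k-1).factorial:ℝ)) * (C₁*a)^(k-1)) := by ring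
                _ ≤ (2:ℝ)^n * ((n.choose (k-1) : ℝ) * P^(k-1)) :=
                    mul_le_mul_of_nonneg_left
                      (mul_le_mul e3 e1 w1 (by positivity)) h2npos.le
                _ = (2:ℝ)^n * (n.choose (k-1)) * P^(k-1) := by ring
      have heq : (2:ℝ)^n * (((n:ℝ)/2)^(k-1) / ((k-1).factorial:ℝ)) * (C₁*a)^(k-1) * (1/2)
          = (C₁^(k-1)/(2^k * ((k-1).factorial : ℝ))) * R := by
        rw [ha, mul_pow, mul_pow, hAk1, div_pow]
        have hfk : (((k-1).factorial:ℝ)) ≠ 0 := by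
          have : (0:ℝ) < ((k-1).factorial:ℝ) := by exact_mod_cast (k-1).factorial_pos
          linarith
        have h2k : (2:ℝ)^k = 2^(k-1) * 2 := by
          rw [← pow_succ]
          congr 1
          omega
        rw [h2k]
        field_simp
        try ring
        rw [← mul_pow, mul_inv_cancel₀ hnne, one_pow]
      show 1 ≤ (2:ℝ)^n * (n.choose (k-1)) * P^(k-1) * (1-P)^(n-(k-1))
      calc (1:ℝ) ≤ (C₁^(k-1)/(2^k * ((k-1).factorial : ℝ))) * R := hE4
        _ = (2:ℝ)^n * (((n:ℝ)/2)^(k-1) / ((k-1).factorial:ℝ)) * (C₁*a)^(k-1) * (1/2) := heq.symm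
        _ ≤ _ := hc
    have hub : ∀ j ∈ S, j ≤ k := by
      intro j hj
      by_contra hjk
      push_neg at hjk
      have hj1 : k + 1 ≤ j := hjk
      have hfj : (2:ℝ)^n * (n.choose j) * P^j * (1-P)^(n-j) < 1 := by
        by_cases hjn : j ≤ n
        · have hb1 : (2:ℝ)^n * (n.choose j) * P^j * (1-P)^(n-j)
              ≤ (2:ℝ)^n * ((n:ℝ)*P)^j := by
            have e2 : (1-P)^(n-j) ≤ 1 := pow_le_one₀ h1P0 h1P1
            have e3 := hchoose_up j
            have hmp : (n.choose j : ℝ) * P^j ≤ ((n:ℝ)*P)^j := by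
              rw [mul_pow]
              exact mul_le_mul_of_nonneg_right e3 (by positivity)
            have w : (0:ℝ) ≤ (2:ℝ)^n := by positivity
            calc (2:ℝ)^n * (n.choose j) * P^j * (1-P)^(n-j)
                ≤ (2:ℝ)^n * (n.choose j) * P^j * 1 := by
                  apply mul_le_mul_of_nonneg_left e2
                  positivity
              _ = (2:ℝ)^n * ((n.choose j : ℝ) * P^j) := by ring
              _ ≤ (2:ℝ)^n * ((n:ℝ)*P)^j := mul_le_mul_of_nonneg_left hmp w
          have hb2 : ((n:ℝ)*P)^j ≤ (C₂*A)^j :=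
            pow_le_pow_left₀ (by positivity) hnP j
          have hb3 : (C₂*A)^j ≤ (C₂*A)^(k+1) :=
            pow_le_pow_of_le_one (by positivity) (by linarith) hj1
          have hb4 : (2:ℝ)^n * (C₂*A)^(k+1) = C₂^(k+1) * R⁻¹ := by
            rw [mul_pow, hAk2]
            field_simp
            try ring
          have hb5 : C₂^(k+1) * R⁻¹ < 1 := by
            rw [← div_eq_mul_inv, div_lt_one hR0]
            exact hE3
          have w : (0:ℝ) ≤ (2:ℝ)^n := by positivity
          calc (2:ℝ)^n * (n.choose j) * P^j * (1-P)^(n-j)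
              ≤ (2:ℝ)^n * ((n:ℝ)*P)^j := hb1
            _ ≤ (2:ℝ)^n * (C₂*A)^(k+1) :=
                mul_le_mul_of_nonneg_left (le_trans hb2 hb3) w
            _ = C₂^(k+1) * R⁻¹ := hb4
            _ < 1 := hb5
        · have : n.choose j = 0 := Nat.choose_eq_zero_of_lt (by omega)
          rw [this]
          norm_num
      have : ¬ (1:ℝ) ≤ (2:ℝ)^n * (n.choose j) * P^j * (1-P)^(n-j) := by linarith
      exact this hj
    have hbdd : BddAbove S := ⟨k, fun j hj => hub j hj⟩
    have h1 : k - 1 ≤ sSup S := le_csSup hbdd hmem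
    have h2 : sSup S ≤ k := csSup_le ⟨k-1, hmem⟩ hub
    have hEq : kappa n P = sSup S := rfl
    rw [hEq]
    omega
  exact ⟨⟨hlower, hupper⟩, hkappa⟩

/-- `2^(n/k)` as a geometric sequence -/
lemma rpow_geom (k : ℕ) (hk : 1 ≤ k) (n : ℕ) :
    (2:ℝ) ^ ((n:ℝ)/(k:ℝ)) = ((2:ℝ) ^ ((1:ℝ)/(k:ℝ)))^n := by
  rw [rpow_pow]
  congr 1
  ring

lemma r_gt_one (k : ℕ) (hk : 1 ≤ k) : 1 < (2:ℝ) ^ ((1:ℝ)/(k:ℝ)) := by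
  have hk0 : (0:ℝ) < k := by exact_mod_cast hk
  rw [Real.one_lt_rpow_iff_of_pos (by norm_num)]
  left
  constructor
  · norm_num
  · positivity

lemma tendsto_R (k : ℕ) (hk : 1 ≤ k) :
    Tendsto (fun n : ℕ => (2:ℝ) ^ ((n:ℝ)/(k:ℝ))) atTop atTop := by
  have h := tendsto_pow_atTop_atTop_of_one_lt (r_gt_one k hk)
  apply h.congr
  intro n
  rw [rpow_geom k hk]

lemma tendsto_R_div_pow (k m : ℕ) (hk : 1 ≤ k) :
    Tendsto (fun n : ℕ => (2:ℝ) ^ ((n:ℝ)/(k:ℝ)) / (n:ℝ)^m) atTop atTop := by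
  set r : ℝ := (2:ℝ) ^ ((1:ℝ)/(k:ℝ)) with hr
  have hr1 : 1 < r := r_gt_one k hk
  have hr0 : 0 < r := by linarith
  have hrinv : |r⁻¹| < 1 := by
    rw [abs_of_pos (by positivity)]
    rw [inv_lt_one_iff₀]
    right; exact hr1
  have hg : Tendsto (fun n : ℕ => (n:ℝ)^m * (r⁻¹)^n) atTop (nhds 0) :=
    tendsto_pow_const_mul_const_pow_of_abs_lt_one m hrinv
  have hgpos : ∀ᶠ n : ℕ in atTop, (n:ℝ)^m * (r⁻¹)^n ∈ Set.Ioi (0:ℝ) := by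
    filter_upwards [eventually_ge_atTop 1] with n hn
    have hn0 : (0:ℝ) < (n:ℝ) := by exact_mod_cast hn
    have : (0:ℝ) < (n:ℝ)^m * (r⁻¹)^n := by positivity
    exact this
  have hg' : Tendsto (fun n : ℕ => (n:ℝ)^m * (r⁻¹)^n) atTop (nhdsWithin 0 (Set.Ioi 0)) :=
    tendsto_nhdsWithin_of_tendsto_nhds_of_eventually_within _ hg hgpos
  have hinv := hg'.inv_tendsto_nhdsGT_zero
  apply hinv.congr'
  filter_upwards [eventually_ge_atTop 1] with n hn
  have hn0 : (0:ℝ) < (n:ℝ) := by exact_mod_cast hn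
  simp only [Pi.inv_apply]
  rw [mul_inv, inv_pow, inv_inv, rpow_geom k hk]
  rw [div_eq_mul_inv, mul_comm]

lemma tendsto_bound (k : ℕ) (hk : 1 ≤ k) (C₁ C₂ : ℝ) (hC₁ : 0 < C₁) (hC₂ : 0 < C₂) :
    Tendsto (fun n : ℕ => C₂^(k+1) * ((2:ℝ)^((n:ℝ)/(k:ℝ)))⁻¹
      + Real.exp (-((C₁^(k-1)/4) * ((2:ℝ)^((n:ℝ)/(k:ℝ)) / (n:ℝ)^(k-1)))))
      atTop (nhds 0) := by
  have h1 : Tendsto (fun n : ℕ => C₂^(k+1) * ((2:ℝ)^((n:ℝ)/(k:ℝ)))⁻¹) atTop (nhds 0) := by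
    have hinv : Tendsto (fun n : ℕ => ((2:ℝ)^((n:ℝ)/(k:ℝ)))⁻¹) atTop (nhds 0) :=
      (tendsto_R k hk).inv_tendsto_atTop
    have := hinv.const_mul (C₂^(k+1))
    simpa using this
  have h2 : Tendsto (fun n : ℕ =>
      Real.exp (-((C₁^(k-1)/4) * ((2:ℝ)^((n:ℝ)/(k:ℝ)) / (n:ℝ)^(k-1))))) atTop (nhds 0) := by
    have hc : (0:ℝ) < C₁^(k-1)/4 := by positivity
    have hmul : Tendsto (fun n : ℕ => (C₁^(k-1)/4) * ((2:ℝ)^((n:ℝ)/(k:ℝ)) / (n:ℝ)^(k-1)))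
        atTop atTop := (tendsto_R_div_pow k (k-1) hk).const_mul_atTop hc
    have hneg : Tendsto (fun n : ℕ =>
        -((C₁^(k-1)/4) * ((2:ℝ)^((n:ℝ)/(k:ℝ)) / (n:ℝ)^(k-1)))) atTop atBot :=
      tendsto_neg_atTop_atBot.comp hmul
    exact Real.tendsto_exp_atBot.comp hneg
  have := h1.add h2
  simpa using this

open scoped ENNReal in
set_option maxHeartbeats 1000000 in
lemma stmt3_bound (k : ℕ) (hk : 1 ≤ k) (C₁ C₂ : ℝ) (hC₁ : 0 < C₁) (hC₂ : 0 < C₂)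
    (n : ℕ) (P : ℝ) (hP0 : 0 < P) (hP1 : P ≤ 1)
    (hL : C₁ * ((2:ℝ) ^ (-(n:ℝ) / (k:ℝ)) * (n:ℝ)⁻¹) ≤ P)
    (hU : P ≤ C₂ * ((2:ℝ) ^ (-(n:ℝ) / (k:ℝ)) * (n:ℝ)⁻¹))
    (hn : 2*k+2 ≤ n)
    (hE2 : 2*C₂ ≤ (2:ℝ) ^ ((n:ℝ)/(k:ℝ))) :
    cubeMeasure n P {ω | maxDeg (randCube n ω) = k - 1 ∨ maxDeg (randCube n ω) = k}ᶜ
      ≤ ENNReal.ofReal (C₂^(k+1) * ((2:ℝ)^((n:ℝ)/(k:ℝ)))⁻¹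
        + Real.exp (-((C₁^(k-1)/4) * ((2:ℝ)^((n:ℝ)/(k:ℝ)) / (n:ℝ)^(k-1))))) := by
  have hk0 : (0:ℝ) < k := by exact_mod_cast hk
  have hnpos : 0 < n := by omega
  have hnR : (1:ℝ) ≤ (n:ℝ) := by exact_mod_cast hnpos
  have hnne : (n:ℝ) ≠ 0 := by positivity
  set A : ℝ := (2:ℝ) ^ (-(n:ℝ)/(k:ℝ)) with hA
  set R : ℝ := (2:ℝ) ^ ((n:ℝ)/(k:ℝ)) with hR
  have hA0 : 0 < A := Real.rpow_pos_of_pos (by norm_num) _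
  have hR0 : 0 < R := Real.rpow_pos_of_pos (by norm_num) _
  have hAR : A = R⁻¹ := by
    rw [hA, hR, neg_div, Real.rpow_neg (by norm_num)]
  set a : ℝ := A * (n:ℝ)⁻¹ with ha
  have ha0 : 0 < a := by apply mul_pos hA0; positivity
  have hna : (n:ℝ) * a = A := by rw [ha]; field_simp
  have h2npos : (0:ℝ) < 2^n := by positivity
  have hAk1 : A ^ (k-1) = ((2:ℝ)^n)⁻¹ * R := by
    rw [hA, rpow_pow]
    have hcast : ((k-1 : ℕ):ℝ) = (k:ℝ) - 1 := by
      rw [Nat.cast_sub hk]; norm_num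
    have h : -(n:ℝ)/(k:ℝ) * ((k-1:ℕ):ℝ) = -(n:ℝ) + (n:ℝ)/(k:ℝ) := by
      rw [hcast]; field_simp; ring
    rw [h, Real.rpow_add (by norm_num), rpow_neg_nat, hR]
  have hAk2 : A ^ (k+1) = ((2:ℝ)^n)⁻¹ * R⁻¹ := by
    rw [hA, rpow_pow]
    have h : -(n:ℝ)/(k:ℝ) * ((k+1:ℕ):ℝ) = -(n:ℝ) + (-(n:ℝ)/(k:ℝ)) := by
      push_cast; field_simp; ring
    rw [h, Real.rpow_add (by norm_num), rpow_neg_nat, ← hAR]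
  have hCA : C₂ * A ≤ 1/2 := by
    rw [hAR, ← div_eq_mul_inv, div_le_div_iff₀ hR0 (by norm_num : (0:ℝ) < 2)]
    linarith
  have hainvle : a ≤ A := by
    have := mul_le_mul_of_nonneg_left (inv_le_one_of_one_le₀ hnR) hA0.le
    rw [mul_one] at this
    rw [ha]; exact this
  have hCa : C₂ * a ≤ C₂ * A := mul_le_mul_of_nonneg_left hainvle hC₂.le
  have hPhalf : P ≤ 1/2 := le_trans hU (le_trans hCa hCA)
  have h1P0 : (0:ℝ) ≤ 1 - P := by linarith
  have h1P1 : 1 - P ≤ 1 := by linarith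
  have hnP : (n:ℝ) * P ≤ C₂ * A := by
    have h1 : (n:ℝ) * P ≤ (n:ℝ) * (C₂ * a) :=
      mul_le_mul_of_nonneg_left hU (by positivity)
    have h2 : (n:ℝ) * (C₂ * a) = C₂ * A := by rw [← hna]; ring
    linarith
  have hbern : 1/2 ≤ (1-P)^n := by
    have h1 := one_add_mul_le_pow (show (-2:ℝ) ≤ -P by linarith) n
    have h2 : (1 + (n:ℝ) * -P) = 1 - (n:ℝ)*P := by ring
    rw [h2] at h1
    have h3 : (1 + -P)^n = (1-P)^n := by ring_nf
    rw [h3] at h1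
    linarith
  have hmono : ∀ m : ℕ, m ≤ n → (1-P)^n ≤ (1-P)^m :=
    fun m hm => pow_le_pow_of_le_one h1P0 h1P1 hm
  -- apply the measure bound
  refine le_trans (measure_bad_le hP1 hk (by omega)) ?_
  -- T1 bound
  have hT1 : (2:ℝ≥0∞)^n * (n.choose (k+1)) * (ENNReal.ofReal P)^(k+1)
      ≤ ENNReal.ofReal (C₂^(k+1) * R⁻¹) := by
    have hre : (2:ℝ≥0∞)^n * (n.choose (k+1)) * (ENNReal.ofReal P)^(k+1)
        = ENNReal.ofReal ((2:ℝ)^n * (n.choose (k+1)) * P^(k+1)) := by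
      rw [ENNReal.ofReal_mul (by positivity), ENNReal.ofReal_mul (by positivity),
        ENNReal.ofReal_pow hP0.le, ENNReal.ofReal_natCast,
        ← ENNReal.ofReal_ofNat 2, ← ENNReal.ofReal_pow (by norm_num : (0:ℝ) ≤ 2)]
    rw [hre]
    apply ENNReal.ofReal_le_ofReal
    have e3 : ((n.choose (k+1)) : ℝ) ≤ (n:ℝ)^(k+1) := by
      exact_mod_cast Nat.choose_le_pow n (k+1)
    have e1 : P^(k+1) ≤ (C₂*a)^(k+1) := pow_le_pow_left₀ hP0.le hU (k+1)
    have hb : (2:ℝ)^n * (n.choose (k+1)) * P^(k+1)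
        ≤ (2:ℝ)^n * ((n:ℝ)^(k+1) * (C₂*a)^(k+1)) := by
      calc (2:ℝ)^n * (n.choose (k+1)) * P^(k+1)
          = (2:ℝ)^n * ((n.choose (k+1) : ℝ) * P^(k+1)) := by ring
        _ ≤ (2:ℝ)^n * ((n:ℝ)^(k+1) * (C₂*a)^(k+1)) :=
            mul_le_mul_of_nonneg_left
              (mul_le_mul e3 e1 (by positivity) (by positivity)) h2npos.le
    have heq : (2:ℝ)^n * ((n:ℝ)^(k+1) * (C₂*a)^(k+1)) = C₂^(k+1) * R⁻¹ := by
      rw [ha, mul_pow, mul_pow, hAk2, inv_pow]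
      field_simp
      try ring
    linarith
  -- T2 bound
  set q : ℝ := P^(k-1) * (1-P)^(n-(k-1)) with hqdef
  have hq0 : 0 ≤ q := by positivity
  have hq1 : q ≤ 1 :=
    mul_le_one₀ (pow_le_one₀ hP0.le hP1) (by positivity) (pow_le_one₀ h1P0 h1P1)
  have hT2 : (1 - ENNReal.ofReal P ^ (k-1) * (1 - ENNReal.ofReal P)^(n-(k-1))) ^ 2^(n-1)
      ≤ ENNReal.ofReal (Real.exp (-((C₁^(k-1)/4) * (R / (n:ℝ)^(k-1))))) := by
    have hofq : ENNReal.ofReal P ^ (k-1) * (1 - ENNReal.ofReal P)^(n-(k-1))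
        = ENNReal.ofReal q := by
      rw [hqdef, ENNReal.ofReal_mul (by positivity), ENNReal.ofReal_pow hP0.le,
        ENNReal.ofReal_pow h1P0, ENNReal.ofReal_sub 1 hP0.le, ENNReal.ofReal_one]
    rw [hofq]
    have hq' : (1 : ℝ≥0∞) - ENNReal.ofReal q = ENNReal.ofReal (1 - q) := by
      rw [ENNReal.ofReal_sub 1 hq0, ENNReal.ofReal_one]
    rw [hq', ← ENNReal.ofReal_pow (by linarith)]
    apply ENNReal.ofReal_le_ofReal
    set M : ℕ := 2^(n-1) with hM
    have hMR : ((M:ℕ) : ℝ) = 2^n / 2 := by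
      rw [hM]
      push_cast
      rw [eq_div_iff (by norm_num : (2:ℝ) ≠ 0), ← pow_succ]
      congr 1
      omega
    have hstep1 : (1-q)^M ≤ Real.exp (-q) ^ M := by
      apply pow_le_pow_left₀ (by linarith)
      have := Real.add_one_le_exp (-q)
      linarith
    have hstep2 : Real.exp (-q) ^ M = Real.exp ((M:ℝ) * (-q)) := by
      rw [← Real.exp_nat_mul]
    have hqlow : (C₁*a)^(k-1) * (1/2) ≤ q := by
      rw [hqdef]
      have e1 : (C₁*a)^(k-1) ≤ P^(k-1) := pow_le_pow_left₀ (by positivity) hL (k-1)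
      have e2 : (1/2 : ℝ) ≤ (1-P)^(n-(k-1)) := le_trans hbern (hmono _ (Nat.sub_le _ _))
      exact mul_le_mul e1 e2 (by norm_num) (by positivity)
    have hexparg : (C₁^(k-1)/4) * (R / (n:ℝ)^(k-1)) ≤ (M:ℝ) * q := by
      have h1 : ((2:ℝ)^n/2) * ((C₁*a)^(k-1) * (1/2)) ≤ (M:ℝ) * q := by
        rw [hMR]
        apply mul_le_mul_of_nonneg_left hqlow (by positivity)
      have h2 : ((2:ℝ)^n/2) * ((C₁*a)^(k-1) * (1/2))
          = (C₁^(k-1)/4) * (R / (n:ℝ)^(k-1)) := by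
        rw [ha, mul_pow, mul_pow, hAk1, inv_pow]
        field_simp
        try ring
      linarith
    calc (1-q)^M ≤ Real.exp ((M:ℝ) * (-q)) := by rw [← hstep2]; exact hstep1
      _ ≤ Real.exp (-((C₁^(k-1)/4) * (R / (n:ℝ)^(k-1)))) := by
          apply Real.exp_le_exp.2
          nlinarith
  refine le_trans (add_le_add hT1 hT2) ?_
  rw [← ENNReal.ofReal_add (by positivity) (Real.exp_nonneg _)]

end CubeAux

/-- if `p = Θ(2^{-n/k} n⁻¹)` for a fixed `k ≥ 1`, then
`2^n C(n,k) p^k (1-p)^{n-k} = Θ(1)`, `κ(n) ∈ {k-1, k}`, and a.s. `Δ(G) ∈ {k-1, k}`. -/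
theorem maxDegree_theta_case (k : ℕ) (hk : 1 ≤ k) (p : ℕ → ℝ)
    (hp : ∀ n, 0 < p n ∧ p n ≤ 1)
    (htheta : ∃ C₁ C₂ : ℝ, 0 < C₁ ∧ 0 < C₂ ∧ ∀ᶠ n : ℕ in atTop,
      C₁ * ((2 : ℝ) ^ (-(n : ℝ) / (k : ℝ)) * (n : ℝ)⁻¹) ≤ p n ∧
      p n ≤ C₂ * ((2 : ℝ) ^ (-(n : ℝ) / (k : ℝ)) * (n : ℝ)⁻¹)) :
    (∃ c₁ c₂ : ℝ, 0 < c₁ ∧ 0 < c₂ ∧ ∀ᶠ n : ℕ in atTop,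
      c₁ ≤ (2 : ℝ) ^ n * n.choose k * p n ^ k * (1 - p n) ^ (n - k) ∧
      (2 : ℝ) ^ n * n.choose k * p n ^ k * (1 - p n) ^ (n - k) ≤ c₂) ∧
    (∀ᶠ n : ℕ in atTop, kappa n (p n) = k - 1 ∨ kappa n (p n) = k) ∧
    Tendsto (fun n : ℕ =>
      cubeMeasure n (p n) {ω |
        maxDeg (randCube n ω) = k - 1 ∨ maxDeg (randCube n ω) = k})
      atTop (nhds 1) := by
  obtain ⟨C₁, C₂, hC₁, hC₂, hev⟩ := htheta
  have hkfacpos : (0:ℝ) < (k.factorial : ℝ) := by exact_mod_cast k.factorial_pos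
  have hk1facpos : (0:ℝ) < ((k-1).factorial : ℝ) := by exact_mod_cast (k-1).factorial_pos
  have hRt := CubeAux.tendsto_R k hk
  have hev1 : ∀ᶠ n : ℕ in atTop, 2*k+2 ≤ n := eventually_ge_atTop _
  have hev2 : ∀ᶠ n : ℕ in atTop, 2*C₂ ≤ (2:ℝ)^((n:ℝ)/(k:ℝ)) := hRt.eventually_ge_atTop _
  have hev3 : ∀ᶠ n : ℕ in atTop, C₂^(k+1) < (2:ℝ)^((n:ℝ)/(k:ℝ)) := hRt.eventually_gt_atTop _
  have hev4 : ∀ᶠ n : ℕ in atTop,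
      1 ≤ (C₁^(k-1)/(2^k * ((k-1).factorial:ℝ))) * (2:ℝ)^((n:ℝ)/(k:ℝ)) := by
    have hc : 0 < C₁^(k-1)/(2^k * ((k-1).factorial:ℝ)) := by positivity
    exact (hRt.const_mul_atTop hc).eventually_ge_atTop 1
  have hall : ∀ᶠ n : ℕ in atTop,
      ((C₁^k/(2^(k+1) * (k.factorial : ℝ)) ≤ (2:ℝ)^n * (n.choose k) * p n^k * (1-p n)^(n-k)
        ∧ (2:ℝ)^n * (n.choose k) * p n^k * (1-p n)^(n-k) ≤ C₂^k)
      ∧ (kappa n (p n) = k - 1 ∨ kappa n (p n) = k)) := by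
    filter_upwards [hev, hev1, hev2, hev3, hev4] with n h h1 h2 h3 h4
    exact CubeAux.stmt12 k hk C₁ C₂ hC₁ hC₂ n (p n) (hp n).1 (hp n).2 h.1 h.2 h1 h2 h3 h4
  refine ⟨⟨C₁^k/(2^(k+1) * (k.factorial : ℝ)), C₂^k, by positivity, by positivity, ?_⟩, ?_, ?_⟩
  · filter_upwards [hall] with n hn
    exact hn.1
  · filter_upwards [hall] with n hn
    exact hn.2
  · -- the probabilistic statement
    set u : ℕ → ℝ := fun n => C₂^(k+1) * ((2:ℝ)^((n:ℝ)/(k:ℝ)))⁻¹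
      + Real.exp (-((C₁^(k-1)/4) * ((2:ℝ)^((n:ℝ)/(k:ℝ)) / (n:ℝ)^(k-1)))) with hu
    have hboundev : ∀ᶠ n : ℕ in atTop,
        cubeMeasure n (p n) {ω | maxDeg (randCube n ω) = k - 1 ∨ maxDeg (randCube n ω) = k}ᶜ
          ≤ ENNReal.ofReal (u n) := by
      filter_upwards [hev, hev1, hev2] with n h h1 h2
      exact CubeAux.stmt3_bound k hk C₁ C₂ hC₁ hC₂ n (p n) (hp n).1 (hp n).2 h.1 h.2 h1 h2
    have hu0 : Tendsto u atTop (nhds 0) := CubeAux.tendsto_bound k hk C₁ C₂ hC₁ hC₂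
    have hofu : Tendsto (fun n => ENNReal.ofReal (u n)) atTop (nhds 0) := by
      have := ENNReal.tendsto_ofReal (f := atTop) hu0
      simpa using this
    have hbad0 : Tendsto (fun n : ℕ =>
        cubeMeasure n (p n) {ω | maxDeg (randCube n ω) = k - 1 ∨ maxDeg (randCube n ω) = k}ᶜ)
        atTop (nhds 0) :=
      tendsto_of_tendsto_of_tendsto_of_le_of_le' tendsto_const_nhds hofu
        (Eventually.of_forall (fun n => zero_le)) hboundev
    have hgoodeq : ∀ n : ℕ,
        cubeMeasure n (p n) {ω | maxDeg (randCube n ω) = k - 1 ∨ maxDeg (randCube n ω) = k}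
          = 1 - cubeMeasure n (p n)
              {ω | maxDeg (randCube n ω) = k - 1 ∨ maxDeg (randCube n ω) = k}ᶜ := by
      intro n
      haveI : IsProbabilityMeasure (cubeMeasure n (p n)) := by
        unfold cubeMeasure; infer_instance
      rw [prob_compl_eq_one_sub (CubeAux.measurableSet_all _),
        ENNReal.sub_sub_cancel ENNReal.one_ne_top prob_le_one]
    have hcont : Tendsto (fun x : ENNReal => 1 - x) (nhds 0) (nhds 1) := by
      have h := (ENNReal.continuous_sub_left (a := 1) ENNReal.one_ne_top).tendsto 0
      simpa using h
    have hfin := hcont.comp hbad0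
    apply Tendsto.congr _ hfin
    intro n
    exact (hgoodeq n).symm
end
end

section
/- Let G = G(Q^n,p) be a random subgraph of the n-cube, and let a, b be positive constants with a + b > 1. Then for every 0 < p ≤ 1 with n^b ≥ 6·n·p, almost surely G contains no vertex v such that there are at least n^a vertices u at distance one or two from v in Q^n with degree d_G(u) ≥ n^b. -/
open MeasureTheory Filter Asymptotics

noncomputable section

section AuxNoClustered
open Finset Real

lemma diffSet_inj {n : ℕ} (v : Fin n → Bool) :
    Function.Injective (fun u : Fin n → Bool => (Finset.univ.filter fun i => u i ≠ v i)) := by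
  intro u u' h
  simp only at h
  funext i
  have hi : (u i ≠ v i) ↔ (u' i ≠ v i) := by
    constructor
    · intro hu
      have : i ∈ Finset.univ.filter fun i => u' i ≠ v i := by rw [← h]; simp [hu]
      simpa using this
    · intro hu
      have : i ∈ Finset.univ.filter fun i => u i ≠ v i := by rw [h]; simp [hu]
      simpa using this
  by_cases hu : u i = v i
  · have hu' : u' i = v i := by
      by_contra hc; exact (hi.mpr hc) hu
    rw [hu, hu']
  · have hu' : u' i ≠ v i := hi.mp hu
    rw [Bool.eq_not_of_ne hu, Bool.eq_not_of_ne hu']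

lemma sphere_card_le (n k : ℕ) (v : Fin n → Bool) :
    (Finset.univ.filter fun u => hammingDist u v = k).card ≤ n.choose k := by
  have h := Finset.card_le_card_of_injOn
    (s := Finset.univ.filter fun u : Fin n → Bool => hammingDist u v = k)
    (t := Finset.univ.powersetCard k)
    (fun u : Fin n → Bool => (Finset.univ.filter fun i => u i ≠ v i)) ?_ ((diffSet_inj v).injOn)
  · rwa [Finset.card_powersetCard, Finset.card_univ, Fintype.card_fin] at h
  · intro u hu
    simp only [Finset.mem_coe, Finset.mem_filter] at hu
    rw [Finset.mem_coe, Finset.mem_powersetCard]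
    exact ⟨Finset.subset_univ _, hu.2⟩

lemma ball_card_le (n : ℕ) (v : Fin n → Bool) :
    (Finset.univ.filter fun u => hammingDist u v = 1 ∨ hammingDist u v = 2).card ≤ n*n + n := by
  rw [Finset.filter_or]
  calc _ ≤ _ := Finset.card_union_le _ _
  _ ≤ n.choose 1 + n.choose 2 := Nat.add_le_add (sphere_card_le n 1 v) (sphere_card_le n 2 v)
  _ ≤ n*n + n := by
      rw [Nat.choose_one_right]
      have := Nat.choose_le_pow n 2
      rw [pow_two] at this
      omega

open Classical in
noncomputable def presAt (n : ℕ) (ω : Sym2 (Fin n → Bool) → Bool) (u : Fin n → Bool) :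
    Finset (Sym2 (Fin n → Bool)) :=
  (Finset.univ.filter fun w => (randCube n ω).Adj u w).image (fun w => s(u, w))

open Classical in
lemma card_presAt (n : ℕ) (ω : Sym2 (Fin n → Bool) → Bool) (u : Fin n → Bool) :
    (presAt n ω u).card = deg (randCube n ω) u := by
  rw [presAt, Finset.card_image_of_injOn (fun w _ w' _ h => by
    rwa [Sym2.congr_right] at h)]
  rw [deg, SimpleGraph.neighborSet, Set.ncard_eq_toFinset_card', Set.toFinset_setOf]

open Classical in
noncomputable def cubeEdgesAt (n : ℕ) (u : Fin n → Bool) : Finset (Sym2 (Fin n → Bool)) :=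
  (Finset.univ.filter fun w => hammingDist u w = 1).image (fun w => s(u, w))

lemma presAt_subset (n : ℕ) (ω : Sym2 (Fin n → Bool) → Bool) (u : Fin n → Bool) :
    presAt n ω u ⊆ cubeEdgesAt n u := by
  classical
  intro e he
  rw [presAt, Finset.mem_image] at he
  obtain ⟨w, hw, rfl⟩ := he
  rw [Finset.mem_filter] at hw
  rw [cubeEdgesAt, Finset.mem_image]
  exact ⟨w, Finset.mem_filter.mpr ⟨Finset.mem_univ w, (And.left hw.2)⟩, rfl⟩

lemma presAt_true (n : ℕ) (ω : Sym2 (Fin n → Bool) → Bool) (u : Fin n → Bool)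
    {e : Sym2 (Fin n → Bool)} (he : e ∈ presAt n ω u) : ω e = true ∧ u ∈ e := by
  classical
  rw [presAt, Finset.mem_image] at he
  obtain ⟨w, hw, rfl⟩ := he
  rw [Finset.mem_filter] at hw
  exact ⟨And.right hw.2, Sym2.mem_mk_left u w⟩

lemma fiber_card_le_two {n : ℕ} (S : Finset (Fin n → Bool)) (e : Sym2 (Fin n → Bool)) :
    (S.filter fun u => u ∈ e).card ≤ 2 := by
  classical
  induction e with
  | _ x y =>
    have hsub : (S.filter fun u => u ∈ s(x, y)) ⊆ {x, y} := by
      intro u hu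
      rw [Finset.mem_filter, Sym2.mem_iff] at hu
      simpa using hu.2
    calc (S.filter fun u => u ∈ s(x, y)).card ≤ ({x, y} : Finset _).card :=
          Finset.card_le_card hsub
    _ ≤ 2 := Finset.card_insert_le x {y} |>.trans (by simp)

lemma sum_card_le_two_mul {n : ℕ} (S : Finset (Fin n → Bool))
    (P : (Fin n → Bool) → Finset (Sym2 (Fin n → Bool)))
    (hP : ∀ u, ∀ e ∈ P u, u ∈ e) :
    ∑ u ∈ S, (P u).card ≤ 2 * (S.biUnion P).card := by
  classical
  set T := S.biUnion P with hT
  have h1 : ∀ u ∈ S, (P u).card = ∑ e ∈ T, if e ∈ P u then 1 else 0 := by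
    intro u hu
    rw [← Finset.card_filter]
    congr 1
    apply Finset.Subset.antisymm
    · intro e he
      rw [Finset.mem_filter]
      exact ⟨Finset.mem_biUnion.mpr ⟨u, hu, he⟩, he⟩
    · intro e he
      rw [Finset.mem_filter] at he
      exact he.2
  calc ∑ u ∈ S, (P u).card = ∑ u ∈ S, ∑ e ∈ T, if e ∈ P u then 1 else 0 :=
        Finset.sum_congr rfl h1
  _ = ∑ e ∈ T, ∑ u ∈ S, if e ∈ P u then 1 else 0 := Finset.sum_comm
  _ ≤ ∑ e ∈ T, 2 := by
      apply Finset.sum_le_sum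
      intro e _
      rw [← Finset.card_filter]
      calc (S.filter fun u => e ∈ P u).card ≤ (S.filter fun u => u ∈ e).card := by
            apply Finset.card_le_card
            intro u hu
            rw [Finset.mem_filter] at hu ⊢
            exact ⟨hu.1, hP u _ hu.2⟩
      _ ≤ 2 := fiber_card_le_two S e
  _ = 2 * T.card := by rw [Finset.sum_const, smul_eq_mul, mul_comm]

lemma bad_subset (n : ℕ) (a b : ℝ) (f : ℕ)
    (hf : 2 * f ≤ ⌈(n:ℝ)^a⌉₊ * ⌈(n:ℝ)^b⌉₊ + 1) :
    {ω : Sym2 (Fin n → Bool) → Bool | ∃ v : Fin n → Bool, (n : ℝ) ^ a ≤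
        (({u | (hammingDist u v = 1 ∨ hammingDist u v = 2) ∧
            (n : ℝ) ^ b ≤ (deg (randCube n ω) u : ℝ)}.ncard : ℕ) : ℝ)} ⊆
    ⋃ v : Fin n → Bool,
      ⋃ S ∈ ((Finset.univ.filter fun u => hammingDist u v = 1 ∨ hammingDist u v = 2).powersetCard
          ⌈(n:ℝ)^a⌉₊ : Finset (Finset (Fin n → Bool))),
        ⋃ F ∈ ((S.biUnion (cubeEdgesAt n)).powersetCard f : Finset (Finset (Sym2 (Fin n → Bool)))),
          {ω : Sym2 (Fin n → Bool) → Bool | ∀ e ∈ F, ω e = true} := by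
  classical
  intro ω hω
  obtain ⟨v, hv⟩ := hω
  set m := ⌈(n:ℝ)^a⌉₊ with hm
  set t := ⌈(n:ℝ)^b⌉₊ with ht
  set U := {u | (hammingDist u v = 1 ∨ hammingDist u v = 2) ∧
      (n : ℝ) ^ b ≤ (deg (randCube n ω) u : ℝ)} with hU
  have hmU : m ≤ U.ncard := Nat.ceil_le.mpr (by exact_mod_cast hv)
  rw [Set.ncard_eq_toFinset_card'] at hmU
  obtain ⟨S, hSU, hScard⟩ := Finset.exists_subset_card_eq hmU
  have hSmem : ∀ u ∈ S, u ∈ U := fun u hu => Set.mem_toFinset.mp (hSU hu)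
  -- each u in S has degree ≥ t
  have hdeg : ∀ u ∈ S, t ≤ (presAt n ω u).card := by
    intro u hu
    rw [card_presAt]
    exact Nat.ceil_le.mpr (hSmem u hu).2
  set T := S.biUnion (presAt n ω) with hT
  have hmt : m * t ≤ 2 * T.card := by
    calc m * t = ∑ _u ∈ S, t := by rw [Finset.sum_const, smul_eq_mul, hScard]
    _ ≤ ∑ u ∈ S, (presAt n ω u).card := Finset.sum_le_sum hdeg
    _ ≤ 2 * T.card := sum_card_le_two_mul S _ (fun u e he => (presAt_true n ω u he).2)
  have hfT : f ≤ T.card := by omega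
  obtain ⟨F, hFT, hFcard⟩ := Finset.exists_subset_card_eq hfT
  refine Set.mem_iUnion.mpr ⟨v, Set.mem_iUnion.mpr ⟨S, Set.mem_iUnion.mpr ⟨?_,
    Set.mem_iUnion.mpr ⟨F, Set.mem_iUnion.mpr ⟨?_, ?_⟩⟩⟩⟩⟩
  · rw [Finset.mem_powersetCard]
    refine ⟨fun u hu => ?_, hScard⟩
    rw [Finset.mem_filter]
    exact ⟨Finset.mem_univ u, (hSmem u hu).1⟩
  · rw [Finset.mem_powersetCard]
    refine ⟨fun e he => ?_, hFcard⟩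
    obtain ⟨u, hu, heu⟩ := Finset.mem_biUnion.mp (hFT he)
    exact Finset.mem_biUnion.mpr ⟨u, hu, presAt_subset n ω u heu⟩
  · intro e he
    obtain ⟨u, _, heu⟩ := Finset.mem_biUnion.mp (hFT he)
    exact (presAt_true n ω u heu).1

instance (n : ℕ) (p : ℝ) : IsProbabilityMeasure (cubeMeasure n p) := by
  unfold cubeMeasure; infer_instance

lemma cubeMeasure_cylinder (n : ℕ) (p : ℝ) (hp1 : p ≤ 1)
    (F : Finset (Sym2 (Fin n → Bool))) :
    cubeMeasure n p {ω | ∀ e ∈ F, ω e = true} = ENNReal.ofReal p ^ F.card := by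
  classical
  have hmin : min (Real.toNNReal p) 1 = Real.toNNReal p :=
    min_eq_left (Real.toNNReal_le_one.mpr hp1)
  have hset : {ω : Sym2 (Fin n → Bool) → Bool | ∀ e ∈ F, ω e = true} =
      Set.pi Set.univ (fun e => if e ∈ F then {true} else Set.univ) := by
    ext ω
    simp only [Set.mem_setOf_eq, Set.mem_pi, Set.mem_univ, true_implies]
    constructor
    · intro h e
      by_cases he : e ∈ F
      · simp [he, h e he]
      · simp [he]
    · intro h e he
      have := h e
      rwa [if_pos he, Set.mem_singleton_iff] at this
  rw [cubeMeasure, hset, Measure.pi_pi]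
  have hfac : ∀ e : Sym2 (Fin n → Bool),
      (PMF.bernoulli (min (Real.toNNReal p) 1) (min_le_right _ _)).toMeasure
        (if e ∈ F then {true} else Set.univ) =
      (if e ∈ F then ENNReal.ofReal p else 1) := by
    intro e
    by_cases he : e ∈ F
    · rw [if_pos he, if_pos he,
        PMF.toMeasure_apply_singleton _ _ (measurableSet_singleton _),
        PMF.bernoulli_apply, hmin]
      rfl
    · rw [if_neg he, if_neg he, measure_univ]
  calc ∏ e, (PMF.bernoulli (min (Real.toNNReal p) 1) (min_le_right _ _)).toMeasure
        (if e ∈ F then {true} else Set.univ)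
      = ∏ e, (if e ∈ F then ENNReal.ofReal p else 1) := Finset.prod_congr rfl (fun e _ => hfac e)
    _ = ∏ _e ∈ F, ENNReal.ofReal p := Finset.prod_ite_mem Finset.univ F _ |>.trans (by rw [Finset.univ_inter])
    _ = ENNReal.ofReal p ^ F.card := Finset.prod_const _

lemma card_cubeEdgesAt (n : ℕ) (u : Fin n → Bool) : (cubeEdgesAt n u).card ≤ n := by
  classical
  calc (cubeEdgesAt n u).card
      ≤ (Finset.univ.filter fun w => hammingDist u w = 1).card := Finset.card_image_le
  _ = (Finset.univ.filter fun w => hammingDist w u = 1).card := by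
      congr 1
      apply Finset.filter_congr
      intro w _
      rw [hammingDist_comm]
  _ ≤ n.choose 1 := sphere_card_le n 1 u
  _ = n := Nat.choose_one_right n

lemma measure_bad_le (n : ℕ) (p : ℝ) (hp1 : p ≤ 1) (a b : ℝ) (f : ℕ)
    (hf : 2 * f ≤ ⌈(n:ℝ)^a⌉₊ * ⌈(n:ℝ)^b⌉₊ + 1)
    (hsub : {ω : Sym2 (Fin n → Bool) → Bool | ∃ v : Fin n → Bool, (n : ℝ) ^ a ≤
        (({u | (hammingDist u v = 1 ∨ hammingDist u v = 2) ∧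
            (n : ℝ) ^ b ≤ (deg (randCube n ω) u : ℝ)}.ncard : ℕ) : ℝ)} ⊆
      ⋃ v : Fin n → Bool,
        ⋃ S ∈ ((Finset.univ.filter fun u => hammingDist u v = 1 ∨ hammingDist u v = 2).powersetCard
            ⌈(n:ℝ)^a⌉₊ : Finset (Finset (Fin n → Bool))),
          ⋃ F ∈ ((S.biUnion (cubeEdgesAt n)).powersetCard f : Finset (Finset (Sym2 (Fin n → Bool)))),
            {ω : Sym2 (Fin n → Bool) → Bool | ∀ e ∈ F, ω e = true})
    (hcyl : ∀ F : Finset (Sym2 (Fin n → Bool)),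
      cubeMeasure n p {ω | ∀ e ∈ F, ω e = true} = ENNReal.ofReal p ^ F.card)
    (hball : ∀ v : Fin n → Bool,
      (Finset.univ.filter fun u => hammingDist u v = 1 ∨ hammingDist u v = 2).card ≤ n*n+n) :
    cubeMeasure n p {ω | ∃ v : Fin n → Bool, (n : ℝ) ^ a ≤
        (({u | (hammingDist u v = 1 ∨ hammingDist u v = 2) ∧
            (n : ℝ) ^ b ≤ (deg (randCube n ω) u : ℝ)}.ncard : ℕ) : ℝ)} ≤
    2 ^ n * ((n*n+n).choose ⌈(n:ℝ)^a⌉₊) * ((⌈(n:ℝ)^a⌉₊ * n).choose f) * ENNReal.ofReal p ^ f := by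
  classical
  set m := ⌈(n:ℝ)^a⌉₊ with hm
  set q := ENNReal.ofReal p with hq
  have hterm : ∀ v : Fin n → Bool,
      cubeMeasure n p (⋃ S ∈ ((Finset.univ.filter fun u =>
          hammingDist u v = 1 ∨ hammingDist u v = 2).powersetCard m),
        ⋃ F ∈ ((S.biUnion (cubeEdgesAt n)).powersetCard f), {ω | ∀ e ∈ F, ω e = true})
      ≤ (((n*n+n).choose m) * ((m*n).choose f) : ℕ) * q ^ f := by
    intro v
    have hinner : ∀ S ∈ ((Finset.univ.filter fun u =>
        hammingDist u v = 1 ∨ hammingDist u v = 2).powersetCard m),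
        cubeMeasure n p (⋃ F ∈ ((S.biUnion (cubeEdgesAt n)).powersetCard f),
          {ω : Sym2 (Fin n → Bool) → Bool | ∀ e ∈ F, ω e = true})
        ≤ ((m*n).choose f : ℕ) * q ^ f := by
      intro S hS
      have hScard : S.card = m := (Finset.mem_powersetCard.mp hS).2
      have hEcard : (S.biUnion (cubeEdgesAt n)).card ≤ m * n :=
        (Finset.card_biUnion_le).trans (by
          calc ∑ u ∈ S, (cubeEdgesAt n u).card ≤ ∑ _u ∈ S, n :=
                Finset.sum_le_sum (fun u _ => card_cubeEdgesAt n u)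
          _ = m * n := by rw [Finset.sum_const, smul_eq_mul, hScard])
      calc cubeMeasure n p _ ≤ ∑ F ∈ ((S.biUnion (cubeEdgesAt n)).powersetCard f),
            cubeMeasure n p {ω : Sym2 (Fin n → Bool) → Bool | ∀ e ∈ F, ω e = true} :=
            measure_biUnion_finset_le _ _
      _ = ∑ F ∈ ((S.biUnion (cubeEdgesAt n)).powersetCard f), q ^ f := by
            apply Finset.sum_congr rfl
            intro F hF
            rw [hcyl F, (Finset.mem_powersetCard.mp hF).2]
      _ = (((S.biUnion (cubeEdgesAt n)).powersetCard f).card : ℕ) * q ^ f := by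
            rw [Finset.sum_const, nsmul_eq_mul]
      _ ≤ ((m*n).choose f : ℕ) * q ^ f := by
            apply mul_le_mul_left
            norm_cast
            rw [Finset.card_powersetCard]
            exact Nat.choose_le_choose f hEcard
    calc cubeMeasure n p _ ≤ ∑ S ∈ ((Finset.univ.filter fun u =>
          hammingDist u v = 1 ∨ hammingDist u v = 2).powersetCard m),
          cubeMeasure n p (⋃ F ∈ ((S.biUnion (cubeEdgesAt n)).powersetCard f),
            {ω : Sym2 (Fin n → Bool) → Bool | ∀ e ∈ F, ω e = true}) :=
          measure_biUnion_finset_le _ _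
    _ ≤ ∑ _S ∈ ((Finset.univ.filter fun u =>
          hammingDist u v = 1 ∨ hammingDist u v = 2).powersetCard m),
          (((m*n).choose f : ℕ) * q ^ f) := Finset.sum_le_sum hinner
    _ = ((((Finset.univ.filter fun u =>
          hammingDist u v = 1 ∨ hammingDist u v = 2).powersetCard m).card : ℕ)) *
          (((m*n).choose f : ℕ) * q ^ f) := by rw [Finset.sum_const, nsmul_eq_mul]
    _ ≤ (((n*n+n).choose m : ℕ)) * (((m*n).choose f : ℕ) * q ^ f) := by
          apply mul_le_mul_left
          norm_cast
          rw [Finset.card_powersetCard]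
          exact Nat.choose_le_choose m (hball v)
    _ = (((n*n+n).choose m) * ((m*n).choose f) : ℕ) * q ^ f := by
          push_cast; ring
  calc cubeMeasure n p _ ≤ cubeMeasure n p (⋃ v : Fin n → Bool,
        ⋃ S ∈ ((Finset.univ.filter fun u =>
            hammingDist u v = 1 ∨ hammingDist u v = 2).powersetCard m),
          ⋃ F ∈ ((S.biUnion (cubeEdgesAt n)).powersetCard f),
            {ω : Sym2 (Fin n → Bool) → Bool | ∀ e ∈ F, ω e = true}) := measure_mono hsub
  _ ≤ ∑' v : Fin n → Bool, cubeMeasure n p (⋃ S ∈ ((Finset.univ.filter fun u =>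
          hammingDist u v = 1 ∨ hammingDist u v = 2).powersetCard m),
        ⋃ F ∈ ((S.biUnion (cubeEdgesAt n)).powersetCard f),
          {ω : Sym2 (Fin n → Bool) → Bool | ∀ e ∈ F, ω e = true}) := measure_iUnion_le _
  _ = ∑ v : Fin n → Bool, cubeMeasure n p (⋃ S ∈ ((Finset.univ.filter fun u =>
          hammingDist u v = 1 ∨ hammingDist u v = 2).powersetCard m),
        ⋃ F ∈ ((S.biUnion (cubeEdgesAt n)).powersetCard f),
          {ω : Sym2 (Fin n → Bool) → Bool | ∀ e ∈ F, ω e = true}) := tsum_fintype _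
  _ ≤ ∑ _v : Fin n → Bool, ((((n*n+n).choose m) * ((m*n).choose f) : ℕ) * q ^ f) :=
        Finset.sum_le_sum (fun v _ => hterm v)
  _ = (Fintype.card (Fin n → Bool) : ℕ) * ((((n*n+n).choose m) * ((m*n).choose f) : ℕ) * q ^ f) := by
        rw [Finset.sum_const, nsmul_eq_mul, Finset.card_univ]
  _ = 2 ^ n * ((n*n+n).choose m) * ((m*n).choose f) * q ^ f := by
        have : Fintype.card (Fin n → Bool) = 2 ^ n := by
          simp [Fintype.card_fun]
        rw [this]
        push_cast
        ring


lemma succ_pow_le (k : ℕ) : ((k:ℝ) + 1) ^ k ≤ (k:ℝ) ^ k * Real.exp 1 := by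
  rcases Nat.eq_zero_or_pos k with hk | hk
  · subst hk; simp
  · have hk0 : (0:ℝ) < k := by exact_mod_cast hk
    have h1 : (k:ℝ) + 1 ≤ (k:ℝ) * Real.exp (1 / k) := by
      have h2 := Real.add_one_le_exp (1 / (k:ℝ))
      calc (k:ℝ) + 1 = (k:ℝ) * (1 / k + 1) := by field_simp; ring
      _ ≤ (k:ℝ) * Real.exp (1 / k) := mul_le_mul_of_nonneg_left h2 hk0.le
    calc ((k:ℝ) + 1) ^ k ≤ ((k:ℝ) * Real.exp (1 / k)) ^ k :=
          pow_le_pow_left₀ (by positivity) h1 k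
    _ = (k:ℝ) ^ k * Real.exp (1 / k) ^ k := mul_pow _ _ _
    _ = (k:ℝ) ^ k * Real.exp 1 := by
        rw [← Real.exp_nat_mul]
        congr 2
        field_simp

lemma pow_le_factorial_mul_exp (k : ℕ) : (k:ℝ) ^ k ≤ (k.factorial : ℝ) * Real.exp 1 ^ k := by
  induction k with
  | zero => norm_num
  | succ k ih =>
    have h1 : ((k:ℝ) + 1) ^ (k + 1) = ((k:ℝ) + 1) * ((k:ℝ) + 1) ^ k := by ring
    push_cast
    rw [h1]
    calc ((k:ℝ) + 1) * ((k:ℝ) + 1) ^ k ≤ ((k:ℝ) + 1) * ((k:ℝ) ^ k * Real.exp 1) :=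
          mul_le_mul_of_nonneg_left (succ_pow_le k) (by positivity)
    _ ≤ ((k:ℝ) + 1) * ((k.factorial : ℝ) * Real.exp 1 ^ k * Real.exp 1) := by
          apply mul_le_mul_of_nonneg_left _ (by positivity)
          exact mul_le_mul_of_nonneg_right ih (Real.exp_pos 1).le
    _ = ((k:ℝ) + 1) * (k.factorial : ℝ) * Real.exp 1 ^ (k + 1) := by ring
    _ = (((k+1).factorial : ℝ)) * Real.exp 1 ^ (k + 1) := by
          rw [Nat.factorial_succ]; push_cast; ring

lemma choose_mul_pow_le {N f : ℕ} {p : ℝ} (hf : 0 < f) (hp : 0 ≤ p)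
    (hNp : (N:ℝ) * p ≤ (f:ℝ) / 3) :
    (N.choose f : ℝ) * p ^ f ≤ (Real.exp 1 / 3) ^ f := by
  have hf0 : (0:ℝ) < f := by exact_mod_cast hf
  have hfac : (0:ℝ) < (f.factorial : ℝ) := by exact_mod_cast f.factorial_pos
  have key : (1:ℝ) / f.factorial ≤ Real.exp 1 ^ f / (f:ℝ) ^ f := by
    rw [div_le_div_iff₀ hfac (by positivity)]
    calc 1 * (f:ℝ) ^ f = (f:ℝ) ^ f := one_mul _
    _ ≤ (f.factorial : ℝ) * Real.exp 1 ^ f := pow_le_factorial_mul_exp f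
    _ = Real.exp 1 ^ f * f.factorial := mul_comm _ _
  calc (N.choose f : ℝ) * p ^ f ≤ ((N:ℝ) ^ f / f.factorial) * p ^ f := by
        apply mul_le_mul_of_nonneg_right _ (by positivity)
        exact_mod_cast Nat.choose_le_pow_div f N
  _ = ((N:ℝ) * p) ^ f * (1 / f.factorial) := by rw [mul_pow]; ring
  _ ≤ ((f:ℝ) / 3) ^ f * (1 / f.factorial) := by
        apply mul_le_mul_of_nonneg_right _ (by positivity)
        exact pow_le_pow_left₀ (by positivity) hNp f
  _ ≤ ((f:ℝ) / 3) ^ f * (Real.exp 1 ^ f / (f:ℝ) ^ f) :=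
        mul_le_mul_of_nonneg_left key (by positivity)
  _ = (Real.exp 1 / 3) ^ f := by
        rw [div_pow, div_pow]
        field_simp


lemma tendsto_main_bound (a b : ℝ) (ha : 0 < a) (hb : 0 < b) (hab : 1 < a + b) :
    Tendsto (fun n : ℕ => (2:ℝ)^n * ((n*n+n : ℕ):ℝ) ^ (⌈(n:ℝ)^a⌉₊) *
      (Real.exp 1 / 3) ^ ((⌈(n:ℝ)^a⌉₊ * ⌈(n:ℝ)^b⌉₊ + 1)/2)) atTop (nhds 0) := by
  set c := (Real.log 3 - 1)/2 with hc
  have hc0 : 0 < c := by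
    have h3 : Real.exp 1 < 3 := by
      have := Real.exp_one_lt_d9
      linarith
    have : 1 < Real.log 3 := (Real.lt_log_iff_exp_lt (by norm_num)).mpr h3
    simp only [hc]; linarith
  set h : ℕ → ℝ := fun n => n * Real.log 2 + 3*((n:ℝ)^a + 1) * Real.log n - c * (n:ℝ)^(a+b)
    with hh
  set φ : ℕ → ℝ := fun n => Real.log 2 * (n:ℝ)^(1-(a+b)) + 3 * (Real.log n / (n:ℝ)^b)
      + 3 * (Real.log n / (n:ℝ)^(a+b)) - c with hφ
  -- h n = n^(a+b) * φ n for n ≥ 1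
  have heq : ∀ᶠ n : ℕ in atTop, h n = (n:ℝ)^(a+b) * φ n := by
    filter_upwards [eventually_ge_atTop 1] with n hn
    have hx : (0:ℝ) < n := by exact_mod_cast hn
    have hxb : (0:ℝ) < (n:ℝ)^b := Real.rpow_pos_of_pos hx b
    have hxab : (0:ℝ) < (n:ℝ)^(a+b) := Real.rpow_pos_of_pos hx (a+b)
    have hxa : (0:ℝ) < (n:ℝ)^a := Real.rpow_pos_of_pos hx a
    have e0 : (n:ℝ)^(1-(a+b)) = (n:ℝ) / (n:ℝ)^(a+b) := by
      rw [eq_div_iff (ne_of_gt hxab), ← Real.rpow_add hx]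
      norm_num
    simp only [hh, hφ]
    rw [e0, Real.rpow_add hx a b]
    field_simp
    ring
  have hφlim : Tendsto φ atTop (nhds (-c)) := by
    have hnat : Tendsto (fun n : ℕ => (n:ℝ)) atTop atTop := tendsto_natCast_atTop_atTop
    have t1 : Tendsto (fun n : ℕ => Real.log 2 * (n:ℝ)^(1-(a+b))) atTop (nhds 0) := by
      have := (tendsto_rpow_neg_atTop (by linarith : (0:ℝ) < a + b - 1)).comp hnat
      have h2 : (fun n : ℕ => Real.log 2 * (n:ℝ)^(1-(a+b)))
          = fun n : ℕ => Real.log 2 * ((n:ℝ)^(-(a+b-1))) := by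
        funext n; ring_nf
      rw [h2]
      simpa using this.const_mul (Real.log 2)
    have t2 : Tendsto (fun n : ℕ => 3 * (Real.log n / (n:ℝ)^b)) atTop (nhds 0) := by
      have := ((isLittleO_log_rpow_atTop hb).tendsto_div_nhds_zero).comp hnat
      simpa using this.const_mul (3:ℝ)
    have t3 : Tendsto (fun n : ℕ => 3 * (Real.log n / (n:ℝ)^(a+b))) atTop (nhds 0) := by
      have := ((isLittleO_log_rpow_atTop (by linarith : (0:ℝ) < a+b)).tendsto_div_nhds_zero).comp hnat
      simpa using this.const_mul (3:ℝ)
    have := ((t1.add t2).add t3).sub (tendsto_const_nhds (x := c))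
    simpa using this
  have hhlim : Tendsto h atTop atBot := by
    have hpow : Tendsto (fun n : ℕ => (n:ℝ)^(a+b)) atTop atTop :=
      (tendsto_rpow_atTop (by linarith : (0:ℝ) < a+b)).comp tendsto_natCast_atTop_atTop
    have := hpow.atTop_mul_neg (by linarith : -c < 0) hφlim
    exact this.congr' (heq.mono fun n hn => hn.symm)
  have hexp : Tendsto (fun n : ℕ => Real.exp (h n)) atTop (nhds 0) :=
    Real.tendsto_exp_atBot.comp hhlim
  -- now squeeze
  apply tendsto_of_tendsto_of_tendsto_of_le_of_le' tendsto_const_nhds hexp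
  · filter_upwards with n
    positivity
  · filter_upwards [eventually_ge_atTop 2] with n hn
    set m := ⌈(n:ℝ)^a⌉₊ with hm
    set t := ⌈(n:ℝ)^b⌉₊ with ht
    set f := (m * t + 1)/2 with hf
    have hx : (0:ℝ) < n := by
      have : 0 < n := by omega
      exact_mod_cast this
    have hx2 : (2:ℝ) ≤ n := by exact_mod_cast hn
    have hlogn : 0 ≤ Real.log n := Real.log_nonneg (by linarith)
    have hB : (0:ℝ) < ((n*n+n : ℕ):ℝ) := by
      have : 0 < n*n+n := by nlinarith [Nat.one_le_iff_ne_zero.mpr (by omega : n ≠ 0)]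
      exact_mod_cast this
    have h2 : (2:ℝ)^n = Real.exp ((n:ℝ) * Real.log 2) := by
      rw [← Real.rpow_natCast 2 n, Real.rpow_def_of_pos (by norm_num : (0:ℝ) < 2), mul_comm]
    have h3 : ((n*n+n : ℕ):ℝ) ^ m ≤ Real.exp (3*((n:ℝ)^a + 1) * Real.log n) := by
      have hBle : ((n*n+n : ℕ):ℝ) ≤ (n:ℝ)^(3:ℕ) := by
        push_cast
        nlinarith
      have hlogB : Real.log ((n*n+n : ℕ):ℝ) ≤ 3 * Real.log n := by
        calc Real.log ((n*n+n : ℕ):ℝ) ≤ Real.log ((n:ℝ)^(3:ℕ)) :=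
              Real.log_le_log hB hBle
        _ = 3 * Real.log n := by rw [Real.log_pow]; norm_num
      have hmle : (m:ℝ) ≤ (n:ℝ)^a + 1 := by
        have := Nat.ceil_lt_add_one (show (0:ℝ) ≤ (n:ℝ)^a by positivity)
        exact le_of_lt this
      calc ((n*n+n : ℕ):ℝ) ^ m = Real.exp ((m:ℝ) * Real.log ((n*n+n : ℕ):ℝ)) := by
            rw [← Real.rpow_natCast _ m, Real.rpow_def_of_pos hB, mul_comm]
      _ ≤ Real.exp (3*((n:ℝ)^a + 1) * Real.log n) := by
            apply Real.exp_le_exp.mpr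
            calc (m:ℝ) * Real.log ((n*n+n : ℕ):ℝ) ≤ (m:ℝ) * (3 * Real.log n) := by
                  apply mul_le_mul_of_nonneg_left hlogB (by positivity)
            _ ≤ ((n:ℝ)^a + 1) * (3 * Real.log n) := by
                  apply mul_le_mul_of_nonneg_right hmle (by positivity)
            _ = 3*((n:ℝ)^a + 1) * Real.log n := by ring
    have h4 : (Real.exp 1 / 3) ^ f ≤ Real.exp (-(c * (n:ℝ)^(a+b))) := by
      have he3 : (0:ℝ) < Real.exp 1 / 3 := by positivity
      have hlog : Real.log (Real.exp 1 / 3) = -(2*c) := by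
        rw [Real.log_div (Real.exp_ne_zero 1) (by norm_num), Real.log_exp]
        simp only [hc]
        ring
      have h2f : (n:ℝ)^(a+b) ≤ 2 * f := by
        have hmt : m * t ≤ 2 * f := by
          have := Nat.div_add_mod (m*t+1) 2
          have hmod := Nat.mod_lt (m*t+1) (show 0 < 2 by norm_num)
          omega
        have hma : (n:ℝ)^a ≤ m := Nat.le_ceil _
        have htb : (n:ℝ)^b ≤ t := Nat.le_ceil _
        calc (n:ℝ)^(a+b) = (n:ℝ)^a * (n:ℝ)^b := Real.rpow_add hx a b
        _ ≤ (m:ℝ) * (t:ℝ) := by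
              apply mul_le_mul hma htb (by positivity) (by positivity)
        _ ≤ 2 * f := by exact_mod_cast hmt
      calc (Real.exp 1 / 3) ^ f = Real.exp ((f:ℝ) * Real.log (Real.exp 1 / 3)) := by
            rw [← Real.rpow_natCast _ f, Real.rpow_def_of_pos he3, mul_comm]
      _ ≤ Real.exp (-(c * (n:ℝ)^(a+b))) := by
            apply Real.exp_le_exp.mpr
            rw [hlog]
            nlinarith
    calc (2:ℝ)^n * ((n*n+n : ℕ):ℝ) ^ m * (Real.exp 1 / 3) ^ f
        = Real.exp ((n:ℝ) * Real.log 2) * ((n*n+n : ℕ):ℝ) ^ m * (Real.exp 1 / 3) ^ f := by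
          rw [h2]
    _ ≤ Real.exp ((n:ℝ) * Real.log 2) * Real.exp (3*((n:ℝ)^a + 1) * Real.log n)
          * Real.exp (-(c * (n:ℝ)^(a+b))) := by
          apply mul_le_mul _ h4 (by positivity) (by positivity)
          exact mul_le_mul_of_nonneg_left h3 (Real.exp_pos _).le
    _ = Real.exp (h n) := by
          rw [← Real.exp_add, ← Real.exp_add]
          simp only [hh]
          ring_nf

end AuxNoClustered

/-- for positive constants `a, b` with `a + b > 1` and `0 < p ≤ 1` with
`n^b ≥ 6np`, a.s. no vertex `v` has at least `n^a` vertices within (Hamming) distance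
one or two whose degree in `G` is at least `n^b`. -/
theorem no_clustered_high_degree (a b : ℝ) (ha : 0 < a) (hb : 0 < b) (hab : 1 < a + b)
    (p : ℕ → ℝ) (hp : ∀ n, 0 < p n ∧ p n ≤ 1)
    (hpb : ∀ n : ℕ, 6 * (n : ℝ) * p n ≤ (n : ℝ) ^ b) :
    Tendsto (fun n : ℕ =>
      cubeMeasure n (p n) {ω |
        ¬ ∃ v : Fin n → Bool, (n : ℝ) ^ a ≤
          (({u | (hammingDist u v = 1 ∨ hammingDist u v = 2) ∧
              (n : ℝ) ^ b ≤ (deg (randCube n ω) u : ℝ)}.ncard : ℕ) : ℝ)})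
      atTop (nhds 1) := by

  classical
  set m : ℕ → ℕ := fun n => ⌈(n:ℝ)^a⌉₊ with hm
  set t : ℕ → ℕ := fun n => ⌈(n:ℝ)^b⌉₊ with ht
  set f : ℕ → ℕ := fun n => (m n * t n + 1)/2 with hf
  have hf2 : ∀ n, 2 * f n ≤ m n * t n + 1 := by
    intro n
    simp only [hf]
    have := Nat.div_add_mod (m n * t n + 1) 2
    omega
  have hf2' : ∀ n, m n * t n ≤ 2 * f n := by
    intro n
    simp only [hf]
    have := Nat.div_add_mod (m n * t n + 1) 2
    have := Nat.mod_lt (m n * t n + 1) (show 0 < 2 by norm_num)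
    omega
  set ε : ℕ → ENNReal := fun n =>
    2 ^ n * ((n*n+n).choose (m n)) * (((m n) * n).choose (f n)) * ENNReal.ofReal (p n) ^ (f n)
    with hε
  have hbad : ∀ n, cubeMeasure n (p n) {ω | (∃ v : Fin n → Bool, (n : ℝ) ^ a ≤
          (({u | (hammingDist u v = 1 ∨ hammingDist u v = 2) ∧
              (n : ℝ) ^ b ≤ (deg (randCube n ω) u : ℝ)}.ncard : ℕ) : ℝ))} ≤ ε n := fun n =>
    measure_bad_le n (p n) (hp n).2 a b (f n) (hf2 n) (bad_subset n a b (f n) (hf2 n))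
      (cubeMeasure_cylinder n (p n) (hp n).2) (ball_card_le n)
  -- ε tends to zero
  have hεlim : Tendsto ε atTop (nhds 0) := by
    have hub : ∀ᶠ n : ℕ in atTop, ε n ≤ ENNReal.ofReal ((2:ℝ)^n * ((n*n+n : ℕ):ℝ) ^ (m n) *
        (Real.exp 1 / 3) ^ (f n)) := by
      filter_upwards [eventually_ge_atTop 1] with n hn
      have hx : (0:ℝ) < n := by
        have : 0 < n := by omega
        exact_mod_cast this
      have hp0 : 0 ≤ p n := (hp n).1.le
      have hm1 : 1 ≤ m n := Nat.one_le_ceil_iff.mpr (Real.rpow_pos_of_pos hx a)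
      have ht1 : 1 ≤ t n := Nat.one_le_ceil_iff.mpr (Real.rpow_pos_of_pos hx b)
      have hf1 : 0 < f n := by
        have h1 : 1 ≤ m n * t n := Nat.one_le_iff_ne_zero.mpr (by positivity)
        have := hf2' n
        omega
      -- (m n * n : ℝ) * p n ≤ f n / 3
      have hNp : ((m n * n : ℕ):ℝ) * p n ≤ (f n : ℝ) / 3 := by
        have h1 : (n:ℝ) * p n ≤ (t n : ℝ) / 6 := by
          have h2 : (n:ℝ)^b ≤ (t n : ℝ) := Nat.le_ceil _
          have := hpb n
          linarith
        have h3 : ((m n : ℕ):ℝ) * ((n:ℝ) * p n) ≤ (m n : ℝ) * ((t n : ℝ)/6) := by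
          apply mul_le_mul_of_nonneg_left h1 (by positivity)
        have h4 : ((m n : ℝ) * (t n : ℝ)) ≤ 2 * (f n : ℝ) := by exact_mod_cast hf2' n
        push_cast at h3 ⊢
        nlinarith
      have hchoose : ((((m n) * n).choose (f n)) : ℝ) * (p n) ^ (f n) ≤
          (Real.exp 1 / 3) ^ (f n) := choose_mul_pow_le hf1 hp0 (by exact_mod_cast hNp)
      have hC1 : (((n*n+n).choose (m n)) : ℝ) ≤ ((n*n+n : ℕ):ℝ) ^ (m n) := by
        exact_mod_cast Nat.choose_le_pow (n*n+n) (m n)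
      calc ε n = ENNReal.ofReal ((2:ℝ)^n * (((n*n+n).choose (m n)) : ℝ) *
            ((((m n) * n).choose (f n) : ℝ) * (p n) ^ (f n))) := by
            rw [hε]
            rw [ENNReal.ofReal_mul (by positivity), ENNReal.ofReal_mul (by positivity),
              ENNReal.ofReal_mul (by positivity), ENNReal.ofReal_pow hp0]
            simp only [ENNReal.ofReal_natCast]
            rw [ENNReal.ofReal_pow (by norm_num), ENNReal.ofReal_ofNat]
            ring
      _ ≤ ENNReal.ofReal ((2:ℝ)^n * ((n*n+n : ℕ):ℝ) ^ (m n) * (Real.exp 1 / 3) ^ (f n)) := by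
            apply ENNReal.ofReal_le_ofReal
            apply mul_le_mul _ hchoose (by positivity) (by positivity)
            apply mul_le_mul_of_nonneg_left hC1 (by positivity)
    have hof : Tendsto (fun n : ℕ => ENNReal.ofReal ((2:ℝ)^n * ((n*n+n : ℕ):ℝ) ^ (m n) *
        (Real.exp 1 / 3) ^ (f n))) atTop (nhds 0) := by
      have := ENNReal.tendsto_ofReal (tendsto_main_bound a b ha hb hab)
      simpa using this
    exact tendsto_of_tendsto_of_tendsto_of_le_of_le' tendsto_const_nhds hof
      (Eventually.of_forall (fun n => zero_le)) hub
  -- squeeze for the good event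
  have hup : ∀ n : ℕ, cubeMeasure n (p n) {ω | ¬ (∃ v : Fin n → Bool, (n : ℝ) ^ a ≤
          (({u | (hammingDist u v = 1 ∨ hammingDist u v = 2) ∧
              (n : ℝ) ^ b ≤ (deg (randCube n ω) u : ℝ)}.ncard : ℕ) : ℝ))} ≤ 1 := fun n => prob_le_one
  have hlow : ∀ n : ℕ, 1 - ε n ≤ cubeMeasure n (p n) {ω | ¬ (∃ v : Fin n → Bool, (n : ℝ) ^ a ≤
          (({u | (hammingDist u v = 1 ∨ hammingDist u v = 2) ∧
              (n : ℝ) ^ b ≤ (deg (randCube n ω) u : ℝ)}.ncard : ℕ) : ℝ))} := by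
    intro n
    rw [tsub_le_iff_right]
    have hcompl : {ω : Sym2 (Fin n → Bool) → Bool | ¬ (∃ v : Fin n → Bool, (n : ℝ) ^ a ≤
          (({u | (hammingDist u v = 1 ∨ hammingDist u v = 2) ∧
              (n : ℝ) ^ b ≤ (deg (randCube n ω) u : ℝ)}.ncard : ℕ) : ℝ))} = {ω | (∃ v : Fin n → Bool, (n : ℝ) ^ a ≤
          (({u | (hammingDist u v = 1 ∨ hammingDist u v = 2) ∧
              (n : ℝ) ^ b ≤ (deg (randCube n ω) u : ℝ)}.ncard : ℕ) : ℝ))}ᶜ :=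
      (Set.compl_setOf _).symm
    calc (1 : ENNReal) = cubeMeasure n (p n) Set.univ := (measure_univ).symm
    _ = cubeMeasure n (p n) ({ω | (∃ v : Fin n → Bool, (n : ℝ) ^ a ≤
          (({u | (hammingDist u v = 1 ∨ hammingDist u v = 2) ∧
              (n : ℝ) ^ b ≤ (deg (randCube n ω) u : ℝ)}.ncard : ℕ) : ℝ))}ᶜ ∪ {ω | (∃ v : Fin n → Bool, (n : ℝ) ^ a ≤
          (({u | (hammingDist u v = 1 ∨ hammingDist u v = 2) ∧
              (n : ℝ) ^ b ≤ (deg (randCube n ω) u : ℝ)}.ncard : ℕ) : ℝ))}) := by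
        rw [Set.compl_union_self]
    _ ≤ cubeMeasure n (p n) {ω | (∃ v : Fin n → Bool, (n : ℝ) ^ a ≤
          (({u | (hammingDist u v = 1 ∨ hammingDist u v = 2) ∧
              (n : ℝ) ^ b ≤ (deg (randCube n ω) u : ℝ)}.ncard : ℕ) : ℝ))}ᶜ + cubeMeasure n (p n) {ω | (∃ v : Fin n → Bool, (n : ℝ) ^ a ≤
          (({u | (hammingDist u v = 1 ∨ hammingDist u v = 2) ∧
              (n : ℝ) ^ b ≤ (deg (randCube n ω) u : ℝ)}.ncard : ℕ) : ℝ))} :=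
        measure_union_le _ _
    _ ≤ cubeMeasure n (p n) {ω | ¬ (∃ v : Fin n → Bool, (n : ℝ) ^ a ≤
          (({u | (hammingDist u v = 1 ∨ hammingDist u v = 2) ∧
              (n : ℝ) ^ b ≤ (deg (randCube n ω) u : ℝ)}.ncard : ℕ) : ℝ))} + ε n := by
        rw [hcompl]
        exact add_le_add_right (hbad n) _
  have hlowlim : Tendsto (fun n : ℕ => 1 - ε n) atTop (nhds 1) := by
    have := ENNReal.Tendsto.sub (tendsto_const_nhds (x := (1:ENNReal))) hεlim
      (Or.inr (by norm_num))
    simpa using this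
  exact tendsto_of_tendsto_of_tendsto_of_le_of_le hlowlim tendsto_const_nhds hlow hup
end
end

section
/- Let G = G(Q^n,p) be a random subgraph of the n-cube with p = p(n) ≥ n^{-2/3}, and let a > 0 be a constant. Then almost surely G contains no vertex v such that there are at least n^a/p vertices u at distance one or two from v in Q^n with degree d_G(u) ≥ np + np/log n. -/
open MeasureTheory Filter Asymptotics

noncomputable section

open Finset

namespace Aux

abbrev V (n : ℕ) := Fin n → Bool
abbrev Conf (n : ℕ) := Sym2 (V n) → Bool

instance (n : ℕ) : IsProbabilityMeasure (cubeMeasure n p) := by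
  unfold cubeMeasure; infer_instance

lemma meas_all {n : ℕ} (S : Set (Conf n)) : MeasurableSet S :=
  MeasurableSet.of_discrete

lemma cyl_measure (n : ℕ) {p : ℝ} (hp1 : p ≤ 1) (F : Finset (Sym2 (V n))) :
    cubeMeasure n p {ω : Conf n | ∀ e ∈ F, ω e = true} = ENNReal.ofReal p ^ F.card := by
  classical
  have hset : {ω : Conf n | ∀ e ∈ F, ω e = true}
      = Set.pi Set.univ (fun e => if e ∈ F then ({true} : Set Bool) else Set.univ) := by
    ext ω
    simp only [Set.mem_setOf_eq, Set.mem_pi, Set.mem_univ, forall_true_left]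
    constructor
    · intro h e
      by_cases he : e ∈ F
      · simp [he, h e he]
      · simp [he]
    · intro h e he
      have := h e
      simpa [he] using this
  rw [cubeMeasure, hset, Measure.pi_pi]
  have hb : ∀ e : Sym2 (V n),
      ((PMF.bernoulli (min (Real.toNNReal p) 1) (min_le_right _ _)).toMeasure)
        (if e ∈ F then ({true} : Set Bool) else Set.univ)
      = if e ∈ F then ENNReal.ofReal p else 1 := by
    intro e
    by_cases he : e ∈ F
    · rw [if_pos he, if_pos he,
        PMF.toMeasure_apply_singleton _ _ (measurableSet_singleton _)]
      simp [PMF.bernoulli_apply, min_eq_left (Real.toNNReal_le_one.mpr hp1), ENNReal.ofReal]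
    · rw [if_neg he, if_neg he]
      exact measure_univ
  simp only [hb]
  rw [Finset.prod_ite_mem, Finset.univ_inter, Finset.prod_const]

lemma even_ham_triangle {n : ℕ} (x y z : V n) :
    Even (hammingDist x y + hammingDist y z + hammingDist x z) := by
  classical
  simp only [hammingDist, Finset.card_filter]
  rw [← Finset.sum_add_distrib, ← Finset.sum_add_distrib]
  refine Finset.sum_induction _ Even (fun _ _ => Even.add) Even.zero ?_
  intro i _
  cases hx : x i <;> cases hy : y i <;> cases hz : z i <;> simp <;> decide

lemma card_sphere_le {n : ℕ} (v : V n) (j : ℕ) :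
    (univ.filter fun u : V n => hammingDist u v = j).card ≤ n.choose j := by
  classical
  have h := Finset.card_le_card_of_injOn
    (f := fun u : V n => univ.filter fun i => u i ≠ v i)
    (s := univ.filter fun u : V n => hammingDist u v = j)
    (t := Finset.univ.powersetCard j)
    (by
      intro u hu
      simp only [Finset.mem_coe, Finset.mem_filter, Finset.mem_univ, true_and] at hu
      simp only [Finset.mem_coe, Finset.mem_powersetCard]
      exact ⟨Finset.subset_univ _, hu⟩)
    (by
      intro u hu u' hu' h
      have hi : (univ.filter fun i => u i ≠ v i) = (univ.filter fun i => u' i ≠ v i) := h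
      funext i
      by_cases hiu : u i = v i
      · by_cases hiu' : u' i = v i
        · rw [hiu, hiu']
        · exfalso
          have : i ∈ univ.filter fun i => u' i ≠ v i := by simp [hiu']
          rw [← hi] at this
          simp only [Finset.mem_filter] at this
          exact this.2 hiu
      · have : i ∈ univ.filter fun i => u i ≠ v i := by simp [hiu]
        rw [hi] at this
        simp only [Finset.mem_filter] at this
        cases hb : u i <;> cases hb' : u' i <;> cases hv : v i <;>
          simp_all)
  simpa [Finset.card_powersetCard] using h

lemma deg_eq {n : ℕ} (ω : Conf n) (u : V n) :
    deg (randCube n ω) u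
      = (univ.filter fun w => hammingDist u w = 1 ∧ ω s(u, w) = true).card := by
  classical
  rw [deg, ← Set.ncard_coe_finset]
  congr 1
  ext w
  simp only [SimpleGraph.mem_neighborSet, Finset.coe_filter, Set.mem_setOf_eq,
    Finset.mem_univ, true_and]
  exact Iff.rfl

end Aux

namespace Aux
open Finset
open scoped ENNReal NNReal

lemma card_nbrs_le {n : ℕ} (u : V n) :
    (univ.filter fun w : V n => hammingDist u w = 1).card ≤ n := by
  have heq : (univ.filter fun w : V n => hammingDist u w = 1)
      = (univ.filter fun w : V n => hammingDist w u = 1) := by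
    ext w; simp [hammingDist_comm]
  rw [heq]
  simpa [Nat.choose_one_right] using card_sphere_le u 1

lemma joint_bound {n : ℕ} {p : ℝ} (hp1 : p ≤ 1)
    (T : Finset (V n)) (hT : ∀ u ∈ T, ∀ u' ∈ T, hammingDist u u' ≠ 1)
    (t k : ℕ) :
    ((t.choose k : ℝ≥0∞)) ^ T.card *
      cubeMeasure n p {ω : Conf n | ∀ u ∈ T, t ≤ deg (randCube n ω) u}
      ≤ ((n.choose k : ℝ≥0∞) * ENNReal.ofReal p ^ k) ^ T.card := by
  classical
  set E : Set (Conf n) := {ω | ∀ u ∈ T, t ≤ deg (randCube n ω) u} with hE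
  set Pk : V n → Finset (Finset (V n)) :=
    fun u => (univ.filter fun w => hammingDist u w = 1).powersetCard k with hPk
  set Z : Conf n → ℝ≥0∞ := fun ω =>
    ∏ u ∈ T, (((Pk u).filter fun S => ∀ w ∈ S, ω s(u, w) = true).card : ℝ≥0∞) with hZ
  have hlow : ∀ ω ∈ E, ((t.choose k : ℝ≥0∞)) ^ T.card ≤ Z ω := by
    intro ω hω
    rw [hZ]
    calc ((t.choose k : ℝ≥0∞)) ^ T.card = ∏ _u ∈ T, ((t.choose k : ℝ≥0∞)) := by
          rw [Finset.prod_const, Finset.card_eq_sum_ones]  -- fix if needed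
      _ ≤ _ := by
          refine Finset.prod_le_prod' ?_
          intro u hu
          have key : (Pk u).filter (fun S => ∀ w ∈ S, ω s(u, w) = true)
              = (univ.filter fun w => hammingDist u w = 1 ∧ ω s(u, w) = true).powersetCard k := by
            ext S
            simp only [Finset.mem_filter, hPk, Finset.mem_powersetCard]
            constructor
            · rintro ⟨⟨hsub, hcard⟩, hall⟩
              refine ⟨?_, hcard⟩
              intro w hw
              have h2 := hsub hw
              simp only [Finset.mem_filter, Finset.mem_univ, true_and] at h2 ⊢
              exact ⟨h2, hall w hw⟩
            · rintro ⟨hsub, hcard⟩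
              refine ⟨⟨?_, hcard⟩, ?_⟩
              · intro w hw
                have h2 := hsub hw
                simp only [Finset.mem_filter, Finset.mem_univ, true_and] at h2 ⊢
                exact h2.1
              · intro w hw
                have h2 := hsub hw
                simp only [Finset.mem_filter, Finset.mem_univ, true_and] at h2
                exact h2.2
          rw [key, Finset.card_powersetCard, ← deg_eq ω u]
          exact_mod_cast Nat.choose_le_choose k (hω u hu)
  have hmark : ((t.choose k : ℝ≥0∞)) ^ T.card * cubeMeasure n p E
      ≤ ∫⁻ ω, Z ω ∂(cubeMeasure n p) := by
    rw [← MeasureTheory.lintegral_indicator_const (meas_all E)]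
    refine MeasureTheory.lintegral_mono ?_
    intro ω
    by_cases hω : ω ∈ E
    · rw [Set.indicator_of_mem hω]; exact hlow ω hω
    · rw [Set.indicator_of_notMem hω]; exact zero_le
  have hZ_expand : ∀ ω, Z ω = ∑ g ∈ T.pi (fun u => Pk u), ∏ x ∈ T.attach,
      (if ∀ w ∈ g x.1 x.2, ω s(x.1, w) = true then (1:ℝ≥0∞) else 0) := by
    intro ω
    simp only [hZ]
    have hc : ∀ u ∈ T, (((Pk u).filter fun S => ∀ w ∈ S, ω s(u, w) = true).card : ℝ≥0∞)
        = ∑ S ∈ Pk u, (if ∀ w ∈ S, ω s(u, w) = true then (1:ℝ≥0∞) else 0) := by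
      intro u _
      rw [Finset.card_filter]
      push_cast
      rfl
    rw [Finset.prod_congr rfl hc, Finset.prod_sum]
  have hterm : ∀ g ∈ T.pi (fun u => Pk u),
      (∫⁻ ω, ∏ x ∈ T.attach,
        (if ∀ w ∈ g x.1 x.2, ω s(x.1, w) = true then (1:ℝ≥0∞) else 0) ∂(cubeMeasure n p))
      ≤ ENNReal.ofReal p ^ (k * T.card) := by
    intro g hg
    have hgmem : ∀ x : {x // x ∈ T}, g x.1 x.2 ⊆ (univ.filter fun w => hammingDist x.1 w = 1)
        ∧ (g x.1 x.2).card = k := by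
      intro x
      exact Finset.mem_powersetCard.mp (Finset.mem_pi.mp hg x.1 x.2)
    set F : Finset (Sym2 (V n)) :=
      T.attach.biUnion (fun x => (g x.1 x.2).image fun w => s(x.1, w)) with hF
    have hprod : ∀ ω : Conf n,
        (∏ x ∈ T.attach, (if ∀ w ∈ g x.1 x.2, ω s(x.1, w) = true then (1:ℝ≥0∞) else 0))
        = Set.indicator {ω : Conf n | ∀ e ∈ F, ω e = true} (fun _ => 1) ω := by
      intro ω
      rw [Finset.prod_boole]
      by_cases hcnd : ω ∈ {ω : Conf n | ∀ e ∈ F, ω e = true}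
      · have hcnd' : ∀ e ∈ F, ω e = true := hcnd
        rw [Set.indicator_of_mem hcnd, if_pos]
        intro x hx w hw
        exact hcnd' _ (Finset.mem_biUnion.mpr ⟨x, hx, Finset.mem_image_of_mem _ hw⟩)
      · rw [Set.indicator_of_notMem hcnd, if_neg]
        intro hall
        apply hcnd
        intro e he
        rcases Finset.mem_biUnion.mp he with ⟨x, hx, he2⟩
        rcases Finset.mem_image.mp he2 with ⟨w, hw, rfl⟩
        exact hall x hx w hw
    simp_rw [hprod]
    rw [MeasureTheory.lintegral_indicator_const (meas_all _), one_mul, cyl_measure n hp1]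
    have hwne : ∀ (x : {x // x ∈ T}) (w : V n), w ∈ g x.1 x.2 → w ≠ x.1 := by
      intro x w hw hcontra
      have h2 := (hgmem x).1 hw
      simp only [Finset.mem_filter, Finset.mem_univ, true_and] at h2
      rw [hcontra, hammingDist_self] at h2
      omega
    have hcard : F.card = k * T.card := by
      rw [hF, Finset.card_biUnion]
      · have heach : ∀ x ∈ T.attach, ((g x.1 x.2).image fun w => s(x.1, w)).card = k := by
          intro x _
          rw [Finset.card_image_of_injOn, (hgmem x).2]
          intro w hw w' hw' hss
          rcases Sym2.eq_iff.mp hss with ⟨_, h⟩ | ⟨h1, h2⟩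
          · exact h
          · exact absurd h1.symm (hwne x w' hw')
        rw [Finset.sum_congr rfl heach, Finset.sum_const, Finset.card_attach,
          smul_eq_mul, mul_comm]
      · intro x _ x' _ hxx'
        rw [Function.onFun, Finset.disjoint_left]
        intro e he he'
        rcases Finset.mem_image.mp he with ⟨w, hw, rfl⟩
        rcases Finset.mem_image.mp he' with ⟨w', hw', hee⟩
        rcases Sym2.eq_iff.mp hee with ⟨h1, _⟩ | ⟨h1, h2⟩
        · exact hxx' (Subtype.ext h1.symm)
        · -- h1 : x'.1 = w, h2 : w' = x.1
          have hd := (hgmem x).1 hw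
          simp only [Finset.mem_filter, Finset.mem_univ, true_and] at hd
          rw [← h1] at hd
          exact hT x.1 x.2 x'.1 x'.2 hd
    rw [hcard]
  have hint : ∫⁻ ω, Z ω ∂(cubeMeasure n p)
      ≤ ((n.choose k : ℝ≥0∞)) ^ T.card * ENNReal.ofReal p ^ (k * T.card) := by
    calc ∫⁻ ω, Z ω ∂(cubeMeasure n p)
        = ∑ g ∈ T.pi (fun u => Pk u), ∫⁻ ω, ∏ x ∈ T.attach,
            (if ∀ w ∈ g x.1 x.2, ω s(x.1, w) = true then (1:ℝ≥0∞) else 0)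
            ∂(cubeMeasure n p) := by
          simp_rw [hZ_expand]
          exact MeasureTheory.lintegral_finset_sum _ (fun g _ => Measurable.of_discrete)
      _ ≤ ∑ _g ∈ T.pi (fun u => Pk u), ENNReal.ofReal p ^ (k * T.card) :=
          Finset.sum_le_sum hterm
      _ = ((T.pi fun u => Pk u).card : ℝ≥0∞) * ENNReal.ofReal p ^ (k * T.card) := by
          rw [Finset.sum_const, nsmul_eq_mul]
      _ ≤ ((n.choose k : ℝ≥0∞)) ^ T.card * ENNReal.ofReal p ^ (k * T.card) := by
          gcongr
          have hcardpi : (T.pi fun u => Pk u).card ≤ (n.choose k) ^ T.card := by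
            rw [Finset.card_pi]
            calc ∏ u ∈ T, (Pk u).card ≤ ∏ _u ∈ T, n.choose k := by
                  refine Finset.prod_le_prod' ?_  -- ℕ version?
                  intro u _
                  rw [hPk, Finset.card_powersetCard]
                  exact Nat.choose_le_choose k (card_nbrs_le u)
              _ = (n.choose k) ^ T.card := Finset.prod_const _
          exact_mod_cast hcardpi
  calc ((t.choose k : ℝ≥0∞)) ^ T.card * cubeMeasure n p E
      ≤ ∫⁻ ω, Z ω ∂(cubeMeasure n p) := hmark
    _ ≤ ((n.choose k : ℝ≥0∞)) ^ T.card * ENNReal.ofReal p ^ (k * T.card) := hint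
    _ = ((n.choose k : ℝ≥0∞) * ENNReal.ofReal p ^ k) ^ T.card := by
        rw [mul_pow, ← pow_mul]

end Aux

namespace Aux
open Finset
open scoped ENNReal

lemma nonadj_of_sphere {n : ℕ} {v u u' : V n} {j : ℕ}
    (h1 : hammingDist u v = j) (h2 : hammingDist u' v = j) :
    hammingDist u u' ≠ 1 := by
  have he := even_ham_triangle u v u'
  rw [h1, hammingDist_comm v u', h2] at he
  obtain ⟨r, hr⟩ := he
  omega

lemma exists_T {n : ℕ} (ω : Conf n) (θ X : ℝ) (t K : ℕ)
    (hts : ∀ d : ℕ, θ ≤ (d : ℝ) → t ≤ d)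
    (hXK : ∀ c₁ c₂ : ℕ, X ≤ (c₁ : ℝ) + (c₂ : ℝ) → K ≤ c₁ ∨ K ≤ c₂)
    (v : V n)
    (hv : X ≤ (({u | (hammingDist u v = 1 ∨ hammingDist u v = 2) ∧
        θ ≤ (deg (randCube n ω) u : ℝ)}.ncard : ℕ) : ℝ)) :
    ∃ j ∈ ({1, 2} : Finset ℕ),
      ∃ T ∈ (univ.filter fun u : V n => hammingDist u v = j).powersetCard K,
        ∀ u ∈ T, t ≤ deg (randCube n ω) u := by
  classical
  have hncard : {u | (hammingDist u v = 1 ∨ hammingDist u v = 2) ∧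
        θ ≤ (deg (randCube n ω) u : ℝ)}.ncard
      = (univ.filter fun u : V n => (hammingDist u v = 1 ∨ hammingDist u v = 2) ∧
          θ ≤ (deg (randCube n ω) u : ℝ)).card := by
    rw [← Set.ncard_coe_finset]
    congr 1
    ext u
    simp
  have hunion : (univ.filter fun u : V n => (hammingDist u v = 1 ∨ hammingDist u v = 2) ∧
          θ ≤ (deg (randCube n ω) u : ℝ))
      ⊆ (univ.filter fun u : V n => hammingDist u v = 1 ∧ θ ≤ (deg (randCube n ω) u : ℝ))
        ∪ (univ.filter fun u : V n => hammingDist u v = 2 ∧ θ ≤ (deg (randCube n ω) u : ℝ)) := by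
    intro u hu
    simp only [Finset.mem_filter, Finset.mem_union, Finset.mem_univ, true_and] at hu ⊢
    tauto
  have hsum : X ≤ ((univ.filter fun u : V n => hammingDist u v = 1 ∧
          θ ≤ (deg (randCube n ω) u : ℝ)).card : ℝ)
      + ((univ.filter fun u : V n => hammingDist u v = 2 ∧
          θ ≤ (deg (randCube n ω) u : ℝ)).card : ℝ) := by
    refine le_trans hv ?_
    rw [hncard]
    have := le_trans (Finset.card_le_card hunion) (Finset.card_union_le _ _)
    exact_mod_cast this
  rcases hXK _ _ hsum with hc | hc
  · refine ⟨1, by simp, ?_⟩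
    obtain ⟨T, hTsub, hTcard⟩ := Finset.exists_subset_card_eq hc
    refine ⟨T, ?_, ?_⟩
    · rw [Finset.mem_powersetCard]
      refine ⟨?_, hTcard⟩
      intro u hu
      have h2 := hTsub hu
      simp only [Finset.mem_filter, Finset.mem_univ, true_and] at h2 ⊢
      exact h2.1
    · intro u hu
      have h2 := hTsub hu
      simp only [Finset.mem_filter, Finset.mem_univ, true_and] at h2
      exact hts _ h2.2
  · refine ⟨2, by simp, ?_⟩
    obtain ⟨T, hTsub, hTcard⟩ := Finset.exists_subset_card_eq hc
    refine ⟨T, ?_, ?_⟩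
    · rw [Finset.mem_powersetCard]
      refine ⟨?_, hTcard⟩
      intro u hu
      have h2 := hTsub hu
      simp only [Finset.mem_filter, Finset.mem_univ, true_and] at h2 ⊢
      exact h2.1
    · intro u hu
      have h2 := hTsub hu
      simp only [Finset.mem_filter, Finset.mem_univ, true_and] at h2
      exact hts _ h2.2

lemma measure_bad_le {n : ℕ} {p : ℝ} (hp1 : p ≤ 1) (hn : 1 ≤ n)
    (θ X : ℝ) (t K k : ℕ)
    (hts : ∀ d : ℕ, θ ≤ (d : ℝ) → t ≤ d)
    (hXK : ∀ c₁ c₂ : ℕ, X ≤ (c₁ : ℝ) + (c₂ : ℝ) → K ≤ c₁ ∨ K ≤ c₂) :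
    (t.choose k : ℝ≥0∞) ^ K *
      cubeMeasure n p {ω : Conf n | ∃ v : V n, X ≤
        (({u | (hammingDist u v = 1 ∨ hammingDist u v = 2) ∧
            θ ≤ (deg (randCube n ω) u : ℝ)}.ncard : ℕ) : ℝ)}
    ≤ (2 : ℝ≥0∞) ^ n * 2 * ((n ^ 2).choose K : ℝ≥0∞) *
        ((n.choose k : ℝ≥0∞) * ENNReal.ofReal p ^ k) ^ K := by
  classical
  set ET : Finset (V n) → Set (Conf n) :=
    fun T => {ω | ∀ u ∈ T, t ≤ deg (randCube n ω) u} with hET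
  have hsub : {ω : Conf n | ∃ v : V n, X ≤
        (({u | (hammingDist u v = 1 ∨ hammingDist u v = 2) ∧
            θ ≤ (deg (randCube n ω) u : ℝ)}.ncard : ℕ) : ℝ)}
      ⊆ ⋃ v ∈ (univ : Finset (V n)), ⋃ j ∈ ({1, 2} : Finset ℕ),
          ⋃ T ∈ (univ.filter fun u : V n => hammingDist u v = j).powersetCard K, ET T := by
    intro ω hω
    obtain ⟨v, hv⟩ := hω
    obtain ⟨j, hj, T, hT, hTdeg⟩ := exists_T ω θ X t K hts hXK v hv
    refine Set.mem_iUnion₂.mpr ⟨v, Finset.mem_univ v, ?_⟩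
    refine Set.mem_iUnion₂.mpr ⟨j, hj, ?_⟩
    exact Set.mem_iUnion₂.mpr ⟨T, hT, hTdeg⟩
  have hmu : cubeMeasure n p {ω : Conf n | ∃ v : V n, X ≤
        (({u | (hammingDist u v = 1 ∨ hammingDist u v = 2) ∧
            θ ≤ (deg (randCube n ω) u : ℝ)}.ncard : ℕ) : ℝ)}
      ≤ ∑ v ∈ (univ : Finset (V n)), ∑ j ∈ ({1, 2} : Finset ℕ),
          ∑ T ∈ (univ.filter fun u : V n => hammingDist u v = j).powersetCard K,
            cubeMeasure n p (ET T) := by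
    refine le_trans (measure_mono hsub) ?_
    refine le_trans (measure_biUnion_finset_le _ _) ?_
    refine Finset.sum_le_sum fun v _ => ?_
    refine le_trans (measure_biUnion_finset_le _ _) ?_
    refine Finset.sum_le_sum fun j _ => ?_
    exact measure_biUnion_finset_le _ _
  -- multiply by (t.choose k)^K and bound each term
  have hterm : ∀ (v : V n), ∀ j ∈ ({1, 2} : Finset ℕ),
      ∀ T ∈ (univ.filter fun u : V n => hammingDist u v = j).powersetCard K,
      (t.choose k : ℝ≥0∞) ^ K * cubeMeasure n p (ET T)
        ≤ ((n.choose k : ℝ≥0∞) * ENNReal.ofReal p ^ k) ^ K := by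
    intro v j hj T hT
    rw [Finset.mem_powersetCard] at hT
    have hsph : ∀ u ∈ T, hammingDist u v = j := by
      intro u hu
      have h2 := hT.1 hu
      simp only [Finset.mem_filter, Finset.mem_univ, true_and] at h2
      exact h2
    have hadj : ∀ u ∈ T, ∀ u' ∈ T, hammingDist u u' ≠ 1 :=
      fun u hu u' hu' => nonadj_of_sphere (hsph u hu) (hsph u' hu')
    have := joint_bound hp1 T hadj t k
    rw [hT.2] at this
    exact this
  -- count of T's
  have hcount : ∀ (v : V n), ∀ j ∈ ({1, 2} : Finset ℕ),
      ((univ.filter fun u : V n => hammingDist u v = j).powersetCard K).card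
        ≤ (n ^ 2).choose K := by
    intro v j hj
    rw [Finset.card_powersetCard]
    refine Nat.choose_le_choose K ?_
    refine le_trans (card_sphere_le v j) ?_
    fin_cases hj
    · simpa [Nat.choose_one_right] using Nat.le_self_pow (by norm_num) n
    · exact Nat.choose_le_pow _ _
  calc (t.choose k : ℝ≥0∞) ^ K * cubeMeasure n p _
      ≤ (t.choose k : ℝ≥0∞) ^ K * ∑ v ∈ (univ : Finset (V n)), ∑ j ∈ ({1, 2} : Finset ℕ),
          ∑ T ∈ (univ.filter fun u : V n => hammingDist u v = j).powersetCard K,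
            cubeMeasure n p (ET T) := by
        exact mul_le_mul_right hmu _
    _ = ∑ v ∈ (univ : Finset (V n)), ∑ j ∈ ({1, 2} : Finset ℕ),
          ∑ T ∈ (univ.filter fun u : V n => hammingDist u v = j).powersetCard K,
            (t.choose k : ℝ≥0∞) ^ K * cubeMeasure n p (ET T) := by
        rw [Finset.mul_sum]
        refine Finset.sum_congr rfl fun v _ => ?_
        rw [Finset.mul_sum]
        refine Finset.sum_congr rfl fun j _ => ?_
        rw [Finset.mul_sum]
    _ ≤ ∑ v ∈ (univ : Finset (V n)), ∑ j ∈ ({1, 2} : Finset ℕ),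
          ∑ _T ∈ (univ.filter fun u : V n => hammingDist u v = j).powersetCard K,
            ((n.choose k : ℝ≥0∞) * ENNReal.ofReal p ^ k) ^ K := by
        refine Finset.sum_le_sum fun v _ => Finset.sum_le_sum fun j hj =>
          Finset.sum_le_sum fun T hT => hterm v j hj T hT
    _ ≤ ∑ _v ∈ (univ : Finset (V n)), ∑ _j ∈ ({1, 2} : Finset ℕ),
          ((n ^ 2).choose K : ℝ≥0∞) * ((n.choose k : ℝ≥0∞) * ENNReal.ofReal p ^ k) ^ K := by
        refine Finset.sum_le_sum fun v _ => Finset.sum_le_sum fun j hj => ?_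
        rw [Finset.sum_const, nsmul_eq_mul]
        refine mul_le_mul_left ?_ _
        exact_mod_cast Nat.cast_le.mpr (hcount v j hj)
    _ = (2 : ℝ≥0∞) ^ n * 2 * ((n ^ 2).choose K : ℝ≥0∞) *
          ((n.choose k : ℝ≥0∞) * ENNReal.ofReal p ^ k) ^ K := by
        rw [Finset.sum_const, Finset.sum_const, Finset.card_univ]
        simp only [nsmul_eq_mul]
        have hcard : Fintype.card (V n) = 2 ^ n := by
          simp [Fintype.card_fun]
        rw [hcard]
        have h2 : ({1, 2} : Finset ℕ).card = 2 := by decide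
        rw [h2]
        push_cast
        ring

end Aux

namespace Aux
open Finset Real

lemma nat_choose_ineq (n t k : ℕ) (hkt : k ≤ t) :
    n.choose k * (t - k) ^ k ≤ n ^ k * t.choose k := by
  calc n.choose k * (t - k) ^ k ≤ n.choose k * (t + 1 - k) ^ k := by
        gcongr <;> omega
    _ ≤ n.choose k * t.descFactorial k :=
        Nat.mul_le_mul_left _ (Nat.pow_sub_le_descFactorial t k)
    _ = n.choose k * (Nat.factorial k * t.choose k) := by
        rw [Nat.descFactorial_eq_factorial_mul_choose]
    _ = (n.choose k * Nat.factorial k) * t.choose k := by ring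
    _ ≤ n ^ k * t.choose k := by
        refine Nat.mul_le_mul_right _ ?_
        calc n.choose k * Nat.factorial k = Nat.factorial k * n.choose k := by ring
          _ = n.descFactorial k := (Nat.descFactorial_eq_factorial_mul_choose n k).symm
          _ ≤ n ^ k := Nat.descFactorial_le_pow n k

lemma real_core (n t k K : ℕ) (q L : ℝ)
    (hq0 : 0 < q) (hL1 : 1 ≤ L)
    (ht : (n : ℝ) * q + (n : ℝ) * q / L ≤ (t : ℝ))
    (hk_low : (n : ℝ) * q / (2 * L) ≤ (k : ℝ))
    (hk_up : (k : ℝ) ≤ (n : ℝ) * q / (2 * L) + 1)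
    (hkt : k ≤ t)
    (hnL : (n : ℝ) ≤ Real.exp L)
    (hbig1 : 64 * L ^ 3 ≤ (n : ℝ) * q)
    (hbig2 : 2 * (n : ℝ) + 1 ≤ (n : ℝ) * q * (K : ℝ) / (32 * L ^ 2)) :
    (2 : ℝ) ^ n * 2 * ((n ^ 2).choose K : ℝ) * ((n.choose k : ℝ) * q ^ k) ^ K
      ≤ (t.choose k : ℝ) ^ K * Real.exp (-(n : ℝ)) := by
  have hL0 : (0 : ℝ) < L := lt_of_lt_of_le one_pos hL1
  set μ : ℝ := (n : ℝ) * q with hμ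
  have hL2 : (1 : ℝ) ≤ L ^ 2 := one_le_pow₀ hL1
  have hL3 : (1 : ℝ) ≤ L ^ 3 := one_le_pow₀ hL1
  have hμ64 : 64 ≤ μ := by
    have h := mul_le_mul_of_nonneg_left hL3 (show (0:ℝ) ≤ 64 by norm_num)
    calc (64 : ℝ) = 64 * 1 := by ring
      _ ≤ 64 * L ^ 3 := h
      _ ≤ μ := hbig1
  have hμ0 : 0 < μ := by linarith
  have hn0 : (0 : ℝ) ≤ (n : ℝ) := Nat.cast_nonneg n
  -- the gap D := t - k as a real
  have hμ6L : 6 * L ≤ μ := by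
    have h := mul_le_mul_of_nonneg_left hL2 (show (0:ℝ) ≤ 64 * L by positivity)
    have h64L : 64 * L ≤ 64 * L ^ 3 := by
      calc 64 * L = 64 * L * 1 := by ring
        _ ≤ 64 * L * L ^ 2 := h
        _ = 64 * L ^ 3 := by ring
    linarith
  have hD : μ * (1 + 1 / (3 * L)) ≤ (t : ℝ) - (k : ℝ) := by
    have h1 : (t : ℝ) - (k : ℝ) ≥ μ + μ / L - (μ / (2 * L) + 1) := by linarith
    have h2 : μ + μ / L - (μ / (2 * L) + 1) ≥ μ * (1 + 1 / (3 * L)) := by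
      rw [ge_iff_le, mul_add, mul_one]
      have hgoal : μ / (6 * L) ≥ 1 := by
        rw [ge_iff_le, le_div_iff₀ (by positivity)]
        linarith
      have e1 : μ / L - μ / (2 * L) = μ / (2 * L) := by ring
      have e2 : μ / (2 * L) - μ / (3 * L) = μ / (6 * L) := by ring
      have e3 : μ * (1 / (3 * L)) = μ / (3 * L) := by ring
      linarith
    linarith
  have hDpos : (0 : ℝ) < (t : ℝ) - (k : ℝ) := lt_of_lt_of_le (by positivity) hD
  set ρ : ℝ := μ / ((t : ℝ) - (k : ℝ)) with hρ
  have hρ0 : 0 ≤ ρ := by positivity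
  have hρle : ρ ≤ 1 - 1 / (8 * L) := by
    rw [hρ, div_le_iff₀ hDpos]
    have : (1 - 1 / (8 * L)) * (μ * (1 + 1 / (3 * L))) ≥ μ := by
      have expand : (1 - 1 / (8 * L)) * (1 + 1 / (3 * L))
          = 1 + (1 / L) * (1 / 3 - 1 / 8 - 1 / (24 * L)) := by
        field_simp
        ring
      have hpos : (1 / L) * (1 / 3 - 1 / 8 - 1 / (24 * L)) ≥ 0 := by
        have h24 : 1 / (24 * L) ≤ 1 / 24 := by
          rw [div_le_div_iff₀ (by positivity) (by norm_num)]
          linarith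
        have : (1 / 3 : ℝ) - 1 / 8 - 1 / (24 * L) ≥ 0 := by linarith
        positivity
      nlinarith
    calc μ ≤ (1 - 1 / (8 * L)) * (μ * (1 + 1 / (3 * L))) := this
      _ ≤ (1 - 1 / (8 * L)) * ((t : ℝ) - (k : ℝ)) := by
          have h8 : (0:ℝ) ≤ 1 - 1 / (8 * L) := by
            have : 1 / (8 * L) ≤ 1 / 8 := by
              rw [div_le_div_iff₀ (by positivity) (by norm_num)]
              linarith
            linarith
          exact mul_le_mul_of_nonneg_left hD h8
  -- choose-ratio bound
  have hstep1 : (n.choose k : ℝ) * q ^ k ≤ ρ ^ k * (t.choose k : ℝ) := by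
    have hnat := nat_choose_ineq n t k hkt
    have hcast : (n.choose k : ℝ) * ((t : ℝ) - (k : ℝ)) ^ k ≤ (n : ℝ) ^ k * (t.choose k : ℝ) := by
      have h1 : ((t - k : ℕ) : ℝ) = (t : ℝ) - (k : ℝ) := by
        rw [Nat.cast_sub hkt]
      calc (n.choose k : ℝ) * ((t : ℝ) - (k : ℝ)) ^ k
          = ((n.choose k * (t - k) ^ k : ℕ) : ℝ) := by push_cast [h1]; ring
        _ ≤ ((n ^ k * t.choose k : ℕ) : ℝ) := by exact_mod_cast hnat
        _ = (n : ℝ) ^ k * (t.choose k : ℝ) := by push_cast; ring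
    have hDk : (0:ℝ) < ((t : ℝ) - (k : ℝ)) ^ k := by positivity
    rw [hρ, div_pow, div_mul_eq_mul_div, le_div_iff₀ hDk]
    calc (n.choose k : ℝ) * q ^ k * ((t : ℝ) - (k : ℝ)) ^ k
        = ((n.choose k : ℝ) * ((t : ℝ) - (k : ℝ)) ^ k) * q ^ k := by ring
      _ ≤ ((n : ℝ) ^ k * (t.choose k : ℝ)) * q ^ k :=
          mul_le_mul_of_nonneg_right hcast (pow_nonneg hq0.le k)
      _ = μ ^ k * (t.choose k : ℝ) := by rw [hμ, mul_pow]; ring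
  -- assemble
  have hexp2 : (2 : ℝ) ^ n * 2 ≤ Real.exp ((n : ℝ) + 1) := by
    have h2e : (2 : ℝ) ≤ Real.exp 1 := by
      have := Real.add_one_le_exp (1 : ℝ)
      linarith
    calc (2 : ℝ) ^ n * 2 ≤ Real.exp 1 ^ n * Real.exp 1 := by
          refine mul_le_mul ?_ h2e (by norm_num) (by positivity)
          exact pow_le_pow_left₀ (by norm_num) h2e n
      _ = Real.exp ((n : ℝ) + 1) := by
          rw [← Real.exp_nat_mul, mul_one, ← Real.exp_add]
  have hchoose2 : ((n ^ 2).choose K : ℝ) ≤ Real.exp (2 * L * (K : ℝ)) := by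
    calc ((n ^ 2).choose K : ℝ) ≤ (((n ^ 2) ^ K : ℕ) : ℝ) := by
          exact_mod_cast Nat.choose_le_pow _ _
      _ = ((n : ℝ) ^ 2) ^ K := by push_cast; ring
      _ ≤ (Real.exp L ^ 2) ^ K := by
          refine pow_le_pow_left₀ (by positivity) ?_ K
          exact pow_le_pow_left₀ hn0 hnL 2
      _ = Real.exp (2 * L * (K : ℝ)) := by
          rw [← Real.exp_nat_mul, ← Real.exp_nat_mul]
          congr 1
          push_cast
          ring
  have hρk : (ρ ^ k) ^ K ≤ Real.exp (-(((k : ℝ) * K) / (8 * L))) := by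
    have hρe : ρ ≤ Real.exp (-(1 / (8 * L))) := by
      have := Real.add_one_le_exp (-(1 / (8 * L)))
      linarith
    calc (ρ ^ k) ^ K = ρ ^ (k * K) := by rw [← pow_mul]
      _ ≤ Real.exp (-(1 / (8 * L))) ^ (k * K) := pow_le_pow_left₀ hρ0 hρe _
      _ = Real.exp (-(((k : ℝ) * K) / (8 * L))) := by
          rw [← Real.exp_nat_mul]
          congr 1
          push_cast
          ring
  have hK0 : (0 : ℝ) ≤ (K : ℝ) := Nat.cast_nonneg K
  have hexponent : (n : ℝ) + 1 + 2 * L * (K : ℝ) + -(((k : ℝ) * K) / (8 * L)) ≤ -(n : ℝ) := by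
    have hkK : ((k : ℝ) * K) / (8 * L) ≥ μ * K / (16 * L ^ 2) := by
      calc μ * K / (16 * L ^ 2) = μ / (2 * L) * ((K : ℝ) / (8 * L)) := by
            rw [div_mul_div_comm]
            ring_nf
        _ ≤ (k : ℝ) * ((K : ℝ) / (8 * L)) :=
            mul_le_mul_of_nonneg_right hk_low (by positivity)
        _ = ((k : ℝ) * K) / (8 * L) := by ring
    have h2LK : 2 * L * (K : ℝ) ≤ μ * K / (32 * L ^ 2) := by
      calc 2 * L * (K : ℝ) = 64 * L ^ 3 * ((K : ℝ) / (32 * L ^ 2)) := by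
            field_simp
            ring
        _ ≤ μ * ((K : ℝ) / (32 * L ^ 2)) :=
            mul_le_mul_of_nonneg_right hbig1 (by positivity)
        _ = μ * K / (32 * L ^ 2) := by ring
    have hsum : μ * K / (16 * L ^ 2) = μ * K / (32 * L ^ 2) + μ * K / (32 * L ^ 2) := by
      ring
    linarith
  have hmain : (2 : ℝ) ^ n * 2 * ((n ^ 2).choose K : ℝ) * (ρ ^ k) ^ K ≤ Real.exp (-(n : ℝ)) := by
    calc (2 : ℝ) ^ n * 2 * ((n ^ 2).choose K : ℝ) * (ρ ^ k) ^ K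
        ≤ Real.exp ((n : ℝ) + 1) * Real.exp (2 * L * (K : ℝ)) *
            Real.exp (-(((k : ℝ) * K) / (8 * L))) := by
          refine mul_le_mul ?_ hρk (by positivity) (by positivity)
          refine mul_le_mul hexp2 hchoose2 (by positivity) (by positivity)
      _ = Real.exp ((n : ℝ) + 1 + 2 * L * (K : ℝ) + -(((k : ℝ) * K) / (8 * L))) := by
          rw [← Real.exp_add, ← Real.exp_add]
      _ ≤ Real.exp (-(n : ℝ)) := Real.exp_le_exp.mpr hexponent
  have hCq_nonneg : (0 : ℝ) ≤ (n.choose k : ℝ) * q ^ k := by positivity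
  calc (2 : ℝ) ^ n * 2 * ((n ^ 2).choose K : ℝ) * ((n.choose k : ℝ) * q ^ k) ^ K
      ≤ (2 : ℝ) ^ n * 2 * ((n ^ 2).choose K : ℝ) * ((ρ ^ k) ^ K * ((t.choose k : ℝ)) ^ K) := by
        refine mul_le_mul_of_nonneg_left ?_ (by positivity)
        rw [← mul_pow]
        exact pow_le_pow_left₀ hCq_nonneg hstep1 K
    _ = ((2 : ℝ) ^ n * 2 * ((n ^ 2).choose K : ℝ) * (ρ ^ k) ^ K) * ((t.choose k : ℝ)) ^ K := by
        ring
    _ ≤ Real.exp (-(n : ℝ)) * ((t.choose k : ℝ)) ^ K :=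
        mul_le_mul_of_nonneg_right hmain (by positivity)
    _ = (t.choose k : ℝ) ^ K * Real.exp (-(n : ℝ)) := by ring

end Aux

open Aux Finset in
open scoped ENNReal in
set_option maxHeartbeats 2000000 in
/-- for `p ≥ n^{-2/3}` and a constant `a > 0`, a.s. no vertex `v` has at
least `n^a / p` vertices within (Hamming) distance one or two whose degree in `G` is at
least `np + np / log n`. -/
theorem no_clustered_high_degree_dense (a : ℝ) (ha : 0 < a)
    (p : ℕ → ℝ) (hp : ∀ n, 0 < p n ∧ p n ≤ 1)
    (hplb : ∀ n : ℕ, (n : ℝ) ^ (-(2 : ℝ) / 3) ≤ p n) :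
    Tendsto (fun n : ℕ =>
      cubeMeasure n (p n) {ω |
        ¬ ∃ v : Fin n → Bool, (n : ℝ) ^ a / p n ≤
          (({u | (hammingDist u v = 1 ∨ hammingDist u v = 2) ∧
              (n : ℝ) * p n + (n : ℝ) * p n / Real.log n
                ≤ (deg (randCube n ω) u : ℝ)}.ncard : ℕ) : ℝ)})
      atTop (nhds 1) := by
  classical
  -- the "bad" events
  have key : Tendsto (fun n : ℕ =>
      cubeMeasure n (p n) {ω : Conf n |
        ∃ v : Fin n → Bool, (n : ℝ) ^ a / p n ≤
          (({u | (hammingDist u v = 1 ∨ hammingDist u v = 2) ∧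
              (n : ℝ) * p n + (n : ℝ) * p n / Real.log n
                ≤ (deg (randCube n ω) u : ℝ)}.ncard : ℕ) : ℝ)})
      atTop (nhds 0) := by
    -- eventual inequalities
    have E2 : ∀ᶠ x : ℝ in atTop, 64 * Real.log x ^ 3 ≤ x ^ ((1 : ℝ)/3) := by
      have h := (isLittleO_log_rpow_atTop (show (0:ℝ) < 1/9 by norm_num)).def
        (show (0:ℝ) < 1/4 by norm_num)
      filter_upwards [h, eventually_ge_atTop (1:ℝ)] with x hx hx1
      have hx0 : (0:ℝ) < x := by linarith
      have hlog0 : 0 ≤ Real.log x := Real.log_nonneg hx1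
      rw [Real.norm_eq_abs, Real.norm_eq_abs, abs_of_nonneg hlog0,
        abs_of_nonneg (Real.rpow_nonneg hx0.le _)] at hx
      have hcube := pow_le_pow_left₀ hlog0 hx 3
      have e : ((1:ℝ)/4 * x ^ ((1:ℝ)/9)) ^ 3 = (1/64) * x ^ ((1:ℝ)/3) := by
        rw [mul_pow, ← Real.rpow_natCast (x ^ ((1:ℝ)/9)) 3, ← Real.rpow_mul hx0.le]
        norm_num
      rw [e] at hcube
      linarith
    have E3 : ∀ᶠ x : ℝ in atTop, 384 * Real.log x ^ 2 ≤ x ^ a := by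
      have h := (isLittleO_log_rpow_atTop (show (0:ℝ) < a/2 by positivity)).def
        (show (0:ℝ) < 1/20 by norm_num)
      filter_upwards [h, eventually_ge_atTop (1:ℝ)] with x hx hx1
      have hx0 : (0:ℝ) < x := by linarith
      have hlog0 : 0 ≤ Real.log x := Real.log_nonneg hx1
      rw [Real.norm_eq_abs, Real.norm_eq_abs, abs_of_nonneg hlog0,
        abs_of_nonneg (Real.rpow_nonneg hx0.le _)] at hx
      have hsq := pow_le_pow_left₀ hlog0 hx 2
      have e : ((1:ℝ)/20 * x ^ (a/2)) ^ 2 = (1/400) * x ^ a := by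
        rw [mul_pow, ← Real.rpow_natCast (x ^ (a/2)) 2, ← Real.rpow_mul hx0.le]
        norm_num
      rw [e] at hsq
      have hxa : (0:ℝ) ≤ x ^ a := Real.rpow_nonneg hx0.le a
      linarith
    have E2n : ∀ᶠ n : ℕ in atTop, 64 * Real.log (n:ℝ) ^ 3 ≤ (n:ℝ) ^ ((1 : ℝ)/3) :=
      tendsto_natCast_atTop_atTop.eventually E2
    have E3n : ∀ᶠ n : ℕ in atTop, 384 * Real.log (n:ℝ) ^ 2 ≤ (n:ℝ) ^ a :=
      tendsto_natCast_atTop_atTop.eventually E3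
    have E4n : ∀ᶠ n : ℕ in atTop, (4:ℝ) ≤ (n:ℝ) ^ a :=
      tendsto_natCast_atTop_atTop.eventually
        ((tendsto_rpow_atTop ha).eventually_ge_atTop 4)
    have hev : ∀ᶠ n : ℕ in atTop,
        cubeMeasure n (p n) {ω : Conf n |
          ∃ v : Fin n → Bool, (n : ℝ) ^ a / p n ≤
            (({u | (hammingDist u v = 1 ∨ hammingDist u v = 2) ∧
                (n : ℝ) * p n + (n : ℝ) * p n / Real.log n
                  ≤ (deg (randCube n ω) u : ℝ)}.ncard : ℕ) : ℝ)}
          ≤ ENNReal.ofReal (Real.exp (-(n:ℝ))) := by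
      filter_upwards [eventually_ge_atTop 3, E2n, E3n, E4n] with n h3 h2 h3' h4
      obtain ⟨hq0, hq1⟩ := hp n
      set q : ℝ := p n with hqdef
      set L : ℝ := Real.log n with hLdef
      have hn0R : (0:ℝ) < (n:ℝ) := by exact_mod_cast (by omega : 0 < n)
      have hL1 : 1 ≤ L := by
        rw [hLdef, Real.le_log_iff_exp_le hn0R]
        calc Real.exp 1 ≤ 2.7182818286 := Real.exp_one_lt_d9.le
          _ ≤ 3 := by norm_num
          _ ≤ (n:ℝ) := by exact_mod_cast h3
      have hL0 : (0:ℝ) < L := lt_of_lt_of_le one_pos hL1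
      set θ : ℝ := (n : ℝ) * q + (n : ℝ) * q / L with hθdef
      set X : ℝ := (n : ℝ) ^ a / q with hXdef
      set t : ℕ := ⌈θ⌉₊ with htdef
      set K : ℕ := ⌊X / 2⌋₊ with hKdef
      set k : ℕ := ⌈(n : ℝ) * q / (2 * L)⌉₊ with hkdef
      -- basic real facts
      have hμ13 : (n:ℝ) ^ ((1:ℝ)/3) ≤ (n:ℝ) * q := by
        calc (n:ℝ) ^ ((1:ℝ)/3) = (n:ℝ) ^ ((1:ℝ) + -(2:ℝ)/3) := by norm_num
          _ = (n:ℝ) ^ (1:ℝ) * (n:ℝ) ^ (-(2:ℝ)/3) := Real.rpow_add hn0R _ _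
          _ = (n:ℝ) * (n:ℝ) ^ (-(2:ℝ)/3) := by rw [Real.rpow_one]
          _ ≤ (n:ℝ) * q := by
              exact mul_le_mul_of_nonneg_left (hplb n) hn0R.le
      have hbig1 : 64 * L ^ 3 ≤ (n:ℝ) * q := le_trans h2 hμ13
      have hμ0 : (0:ℝ) < (n:ℝ) * q := by positivity
      have hL3 : (1:ℝ) ≤ L ^ 3 := one_le_pow₀ hL1
      have hμ64 : (64:ℝ) ≤ (n:ℝ) * q := by nlinarith
      -- k, t facts
      have hk_low : (n:ℝ) * q / (2 * L) ≤ (k:ℝ) := Nat.le_ceil _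
      have hk_up : (k:ℝ) ≤ (n:ℝ) * q / (2 * L) + 1 :=
        (Nat.ceil_lt_add_one (by positivity)).le
      have ht' : θ ≤ (t:ℝ) := Nat.le_ceil _
      have hθμ : (n:ℝ) * q ≤ θ := by
        rw [hθdef]
        have : 0 ≤ (n:ℝ) * q / L := by positivity
        linarith
      have hkt : k ≤ t := by
        have hhalf : (n:ℝ) * q / (2 * L) ≤ (n:ℝ) * q / 2 := by
          apply div_le_div_of_nonneg_left hμ0.le (by norm_num)
          linarith
        have : (k:ℝ) ≤ (t:ℝ) := by
          calc (k:ℝ) ≤ (n:ℝ) * q / (2 * L) + 1 := hk_up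
            _ ≤ (n:ℝ) * q / 2 + 1 := by linarith
            _ ≤ (n:ℝ) * q := by linarith
            _ ≤ θ := hθμ
            _ ≤ (t:ℝ) := ht'
        exact_mod_cast this
      have hnL : (n:ℝ) ≤ Real.exp L := (Real.exp_log hn0R).symm.le
      -- X, K facts
      have hX4 : (4:ℝ) ≤ X := by
        rw [hXdef]
        calc (4:ℝ) ≤ (n:ℝ) ^ a := h4
          _ ≤ (n:ℝ) ^ a / q := by
              rw [le_div_iff₀ hq0]
              nlinarith [Real.rpow_nonneg hn0R.le a]
      have hKX : X / 4 ≤ (K:ℝ) := by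
        have := Nat.sub_one_lt_floor (X / 2)
        rw [hKdef]
        linarith
      have hbig2 : 2 * (n:ℝ) + 1 ≤ (n:ℝ) * q * (K:ℝ) / (32 * L ^ 2) := by
        have hqK : (n:ℝ) * q * (X / 4) ≤ (n:ℝ) * q * (K:ℝ) :=
          mul_le_mul_of_nonneg_left hKX (by positivity)
        have hXq : (n:ℝ) * q * (X / 4) = (n:ℝ) * (n:ℝ) ^ a / 4 := by
          rw [hXdef]
          field_simp
        rw [hXq] at hqK
        have h384 : 384 * ((n:ℝ) * L ^ 2) ≤ (n:ℝ) * (n:ℝ) ^ a := by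
          calc 384 * ((n:ℝ) * L ^ 2) = (n:ℝ) * (384 * L ^ 2) := by ring
            _ ≤ (n:ℝ) * (n:ℝ) ^ a := mul_le_mul_of_nonneg_left h3' hn0R.le
        have hn1 : (1:ℝ) ≤ (n:ℝ) := by exact_mod_cast (by omega : 1 ≤ n)
        have hL2pos : (0:ℝ) < L ^ 2 := pow_pos hL0 2
        have hgoal : (2 * (n:ℝ) + 1) * (32 * L ^ 2) ≤ 96 * ((n:ℝ) * L ^ 2) := by
          nlinarith [mul_nonneg (sub_nonneg.mpr hn1) hL2pos.le]
        rw [le_div_iff₀ (by positivity)]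
        calc (2 * (n:ℝ) + 1) * (32 * L ^ 2) ≤ 96 * ((n:ℝ) * L ^ 2) := hgoal
          _ ≤ (n:ℝ) * (n:ℝ) ^ a / 4 := by linarith
          _ ≤ (n:ℝ) * q * (K:ℝ) := hqK
      -- hypotheses for measure_bad_le
      have hts : ∀ d : ℕ, θ ≤ (d : ℝ) → t ≤ d := fun d hd => Nat.ceil_le.mpr hd
      have hXK : ∀ c₁ c₂ : ℕ, X ≤ (c₁ : ℝ) + (c₂ : ℝ) → K ≤ c₁ ∨ K ≤ c₂ := by
        intro c₁ c₂ hc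
        have h2K : 2 * (K:ℝ) ≤ X := by
          have := Nat.floor_le (show (0:ℝ) ≤ X / 2 by linarith)
          rw [hKdef]
          linarith
        have : 2 * K ≤ c₁ + c₂ := by exact_mod_cast le_trans h2K hc
        omega
      have hmb := measure_bad_le hq1 (by omega : 1 ≤ n) θ X t K k hts hXK
      have hreal := real_core n t k K q L hq0 hL1 ht' hk_low hk_up hkt hnL hbig1 hbig2
      -- transfer the real inequality to ℝ≥0∞
      have hENN : (2 : ℝ≥0∞) ^ n * 2 * ((n ^ 2).choose K : ℝ≥0∞) *
            ((n.choose k : ℝ≥0∞) * ENNReal.ofReal q ^ k) ^ K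
          ≤ (t.choose k : ℝ≥0∞) ^ K * ENNReal.ofReal (Real.exp (-(n:ℝ))) := by
        refine (ENNReal.toReal_le_toReal ?_ ?_).mp ?_
        · refine ENNReal.mul_ne_top (ENNReal.mul_ne_top (ENNReal.mul_ne_top ?_ ?_) ?_) ?_
          · exact ENNReal.pow_ne_top ENNReal.ofNat_ne_top
          · exact ENNReal.ofNat_ne_top
          · exact ENNReal.natCast_ne_top _
          · exact ENNReal.pow_ne_top
              (ENNReal.mul_ne_top (ENNReal.natCast_ne_top _)
                (ENNReal.pow_ne_top ENNReal.ofReal_ne_top))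
        · exact ENNReal.mul_ne_top (ENNReal.pow_ne_top (ENNReal.natCast_ne_top _))
            ENNReal.ofReal_ne_top
        · simp only [ENNReal.toReal_mul, ENNReal.toReal_pow, ENNReal.toReal_natCast,
            ENNReal.toReal_ofNat, ENNReal.toReal_ofReal hq0.le,
            ENNReal.toReal_ofReal (Real.exp_nonneg _)]
          exact hreal
      have hfinal := le_trans hmb hENN
      have hc0 : ((t.choose k : ℝ≥0∞)) ^ K ≠ 0 := by
        apply pow_ne_zero
        exact_mod_cast (Nat.choose_pos hkt).ne'
      have hcT : ((t.choose k : ℝ≥0∞)) ^ K ≠ ⊤ :=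
        ENNReal.pow_ne_top (ENNReal.natCast_ne_top _)
      exact (ENNReal.mul_le_mul_iff_right hc0 hcT).mp hfinal
    have hlim : Tendsto (fun n : ℕ => ENNReal.ofReal (Real.exp (-(n:ℝ)))) atTop (nhds 0) := by
      have h1 : Tendsto (fun n : ℕ => Real.exp (-(n:ℝ))) atTop (nhds 0) :=
        Real.tendsto_exp_atBot.comp (tendsto_neg_atTop_atBot.comp tendsto_natCast_atTop_atTop)
      have := ENNReal.tendsto_ofReal h1
      simpa using this
    exact tendsto_of_tendsto_of_tendsto_of_le_of_le' tendsto_const_nhds hlim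
      (Eventually.of_forall fun n => zero_le) hev
  -- pass to complements
  have hcompl : ∀ n : ℕ,
      cubeMeasure n (p n) {ω : Conf n |
        ¬ ∃ v : Fin n → Bool, (n : ℝ) ^ a / p n ≤
          (({u | (hammingDist u v = 1 ∨ hammingDist u v = 2) ∧
              (n : ℝ) * p n + (n : ℝ) * p n / Real.log n
                ≤ (deg (randCube n ω) u : ℝ)}.ncard : ℕ) : ℝ)}
      = 1 - cubeMeasure n (p n) {ω : Conf n |
        ∃ v : Fin n → Bool, (n : ℝ) ^ a / p n ≤
          (({u | (hammingDist u v = 1 ∨ hammingDist u v = 2) ∧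
              (n : ℝ) * p n + (n : ℝ) * p n / Real.log n
                ≤ (deg (randCube n ω) u : ℝ)}.ncard : ℕ) : ℝ)} := by
    intro n
    rw [← prob_compl_eq_one_sub (meas_all _)]
    rfl
  simp only [hcompl]
  have := ENNReal.Tendsto.sub
    (tendsto_const_nhds : Tendsto (fun _ : ℕ => (1:ℝ≥0∞)) atTop (nhds 1)) key
    (Or.inr (by norm_num))
  simpa using this
end
end
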